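/- arXiv:2509.05569 — 7 statements merged into one kernel-verified Lean document; each statement's English description precedes it below -/
import Mathlib

section
/- Let n ≥ 1 and let U ⊆ ℂ^n be a nonempty connected open set. Let φ, f_1, …, f_r be functions U → ℂ that are analytic on U. Assume that for every tuple (c_1, …, c_r) ∈ ℚ^r the function φ − (c_1 f_1 + ⋯ + c_r f_r) is not identically zero on U. Then the set { s ∈ U : φ(s) lies in the ℚ-linear span of f_1(s), …, f_r(s) in ℂ } is meagre in U; in particular, there exists s ∈ U with φ(s) not in the ℚ-linear span of f_1(s), …, f_r(s). -/
/-- For a nonempty connected open set `U ⊆ ℂⁿ` and functions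
`φ, f₁, …, f_r` analytic on `U`, if for every rational tuple `(c₁, …, c_r)` the
function `φ - ∑ cᵢ fᵢ` is not identically zero on `U`, then the set of points
`s ∈ U` where `φ s` lies in the `ℚ`-linear span of `f₁ s, …, f_r s` is meagre
in `U` (with its subspace topology); in particular some `s ∈ U` has `φ s`
outside that span. -/
theorem stmt0 (n r : ℕ) (hn : 1 ≤ n) (U : Set (Fin n → ℂ))
    (hUopen : IsOpen U) (hUconn : IsConnected U)
    (φ : (Fin n → ℂ) → ℂ) (f : Fin r → (Fin n → ℂ) → ℂ)
    (hφ : AnalyticOnNhd ℂ φ U) (hf : ∀ i, AnalyticOnNhd ℂ (f i) U)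
    (h : ∀ c : Fin r → ℚ, ∃ s ∈ U, φ s - ∑ i, (c i : ℂ) * f i s ≠ 0) :
    IsMeagre {s : U | φ (s : Fin n → ℂ) ∈
        Submodule.span ℚ (Set.range fun i => f i (s : Fin n → ℂ))} ∧
      ∃ s ∈ U, φ s ∉ Submodule.span ℚ (Set.range fun i => f i s) := by
  set g : (Fin r → ℚ) → (Fin n → ℂ) → ℂ :=
    fun c s => φ s - ∑ i, (c i : ℂ) * f i s with hg
  have hganal : ∀ c, AnalyticOnNhd ℂ (g c) U := fun c =>
    hφ.sub (Finset.analyticOnNhd_fun_sum _ fun i _ =>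
      analyticOnNhd_const.mul (hf i))
  -- zero sets inside U
  set Z : (Fin r → ℚ) → Set U := fun c => {s : U | g c (s : Fin n → ℂ) = 0} with hZ
  have hZclosed : ∀ c, IsClosed (Z c) := fun c =>
    isClosed_eq ((hganal c).continuousOn.restrict) continuous_const
  have hZnwd : ∀ c, IsNowhereDense (Z c) := by
    intro c
    rw [(hZclosed c).isNowhereDense_iff]
    by_contra hne
    obtain ⟨x, hx⟩ := Set.nonempty_iff_ne_empty.2 hne
    -- `interior (Z c)` is open in the subtype, so comes from an open set in `ℂⁿ`
    obtain ⟨W, hWopen, hWeq⟩ := isOpen_induced_iff.1 (isOpen_interior : IsOpen (interior (Z c)))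
    have hxW : (x : Fin n → ℂ) ∈ W ∩ U := ⟨by rw [← hWeq] at hx; exact hx, x.2⟩
    have hWU : IsOpen (W ∩ U) := hWopen.inter hUopen
    have hev : g c =ᶠ[nhds (x : Fin n → ℂ)] 0 := by
      filter_upwards [hWU.mem_nhds hxW] with y hy
      have : (⟨y, hy.2⟩ : U) ∈ interior (Z c) := by rw [← hWeq]; exact hy.1
      exact (interior_subset : interior (Z c) ⊆ Z c) this
    have := (hganal c).eqOn_zero_of_preconnected_of_eventuallyEq_zero
      hUconn.isPreconnected x.2 hev
    obtain ⟨s, hsU, hs⟩ := h c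
    exact hs (this hsU)
  -- the bad set is covered by the zero sets
  have hsub : {s : U | φ (s : Fin n → ℂ) ∈
      Submodule.span ℚ (Set.range fun i => f i (s : Fin n → ℂ))} ⊆ ⋃ c, Z c := by
    intro s hs
    rw [Set.mem_setOf_eq, Submodule.mem_span_range_iff_exists_fun] at hs
    obtain ⟨c, hc⟩ := hs
    refine Set.mem_iUnion.2 ⟨c, ?_⟩
    have : (∑ i, c i • f i (s : Fin n → ℂ)) = ∑ i, (c i : ℂ) * f i (s : Fin n → ℂ) := by
      refine Finset.sum_congr rfl fun i _ => ?_
      rw [Rat.smul_def]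
    simp only [hZ, hg, Set.mem_setOf_eq, sub_eq_zero, ← hc, this]
  have hmeagre : IsMeagre {s : U | φ (s : Fin n → ℂ) ∈
      Submodule.span ℚ (Set.range fun i => f i (s : Fin n → ℂ))} := by
    rw [isMeagre_iff_countable_union_isNowhereDense]
    exact ⟨Set.range Z, fun t ⟨c, hc⟩ => hc ▸ hZnwd c, Set.countable_range Z,
      hsub.trans (by rw [Set.sUnion_range])⟩
  refine ⟨hmeagre, ?_⟩
  -- Baire category: the subtype `U` is a nonempty Baire space
  haveI : LocallyCompactSpace U := hUopen.locallyCompactSpace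
  haveI : Nonempty U := hUconn.nonempty.to_subtype
  have hdense : Dense {s : U | φ (s : Fin n → ℂ) ∈
      Submodule.span ℚ (Set.range fun i => f i (s : Fin n → ℂ))}ᶜ :=
    dense_of_mem_residual hmeagre
  obtain ⟨s, hs⟩ := hdense.nonempty
  exact ⟨(s : Fin n → ℂ), s.2, hs⟩
end

section
/- Let α be a real number with 0 < α < 1. For λ, x ∈ (0,1) define F(λ, x) = x^{−α}(1−x)^{−α}(1−λx)^{−α} and H(λ, x) = −α · x^{1−α}(1−x)^{1−α}(1−λx)^{−1−α}, where all powers are real powers of positive real numbers. Then for all λ, x ∈ (0,1): λ(1−λ)·(∂²F/∂λ²)(λ,x) + 2(1−α−λ)·(∂F/∂λ)(λ,x) − α(1−α)·F(λ,x) = (∂H/∂x)(λ,x). -/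
open Real

/-- The integrand `F(λ, x) = x^(−α) (1−x)^(−α) (1−λx)^(−α)` (real powers). -/
noncomputable def Fint (α l x : ℝ) : ℝ :=
  x ^ (-α) * (1 - x) ^ (-α) * (1 - l * x) ^ (-α)

/-- The primitive `H(λ, x) = −α · x^(1−α) (1−x)^(1−α) (1−λx)^(−1−α)` (real powers). -/
noncomputable def Hint (α l x : ℝ) : ℝ :=
  -α * (x ^ (1 - α) * (1 - x) ^ (1 - α) * (1 - l * x) ^ (-1 - α))

/-- For `0 < α < 1` and `λ, x ∈ (0,1)`, the hypergeometric-type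
operator `λ(1−λ)∂²_λ + 2(1−α−λ)∂_λ − α(1−α)` applied to `F(·, x)` equals the
derivative in `x` of `H(λ, ·)`. -/
theorem stmt2 (α : ℝ) (hα0 : 0 < α) (hα1 : α < 1)
    (l x : ℝ) (hl : l ∈ Set.Ioo (0 : ℝ) 1) (hx : x ∈ Set.Ioo (0 : ℝ) 1) :
    l * (1 - l) * deriv (deriv (fun t : ℝ => Fint α t x)) l
      + 2 * (1 - α - l) * deriv (fun t : ℝ => Fint α t x) l
      - α * (1 - α) * Fint α l x
      = deriv (fun u : ℝ => Hint α l u) x := by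
  obtain ⟨hl0, hl1⟩ := hl
  obtain ⟨hx0, hx1⟩ := hx
  have hx1' : 0 < 1 - x := by linarith
  have hlx : 0 < 1 - l * x := by nlinarith
  -- first derivative in λ
  have hF1 : ∀ t : ℝ, 0 < 1 - t * x →
      HasDerivAt (fun s : ℝ => Fint α s x)
        (x ^ (-α) * (1 - x) ^ (-α) * x * α * (1 - t * x) ^ (-α - 1)) t := by
    intro t ht
    have hlin : HasDerivAt (fun s : ℝ => 1 - s * x) (-x) t := by
      simpa using ((hasDerivAt_id t).mul_const x).const_sub 1
    have h := (hlin.rpow_const (p := -α) (Or.inl ht.ne')).const_mul (x ^ (-α) * (1 - x) ^ (-α))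
    simp only [Fint]
    convert h using 1
    · rfl
    · rfl
    ring
  -- second derivative in λ
  have hev : deriv (fun s : ℝ => Fint α s x)
      =ᶠ[nhds l] fun t : ℝ => x ^ (-α) * (1 - x) ^ (-α) * x * α * (1 - t * x) ^ (-α - 1) := by
    have hopen : IsOpen {t : ℝ | 0 < 1 - t * x} :=
      isOpen_lt continuous_const (by fun_prop)
    filter_upwards [hopen.mem_nhds hlx] with t ht using (hF1 t ht).deriv
  have hF2 : HasDerivAt
      (fun t : ℝ => x ^ (-α) * (1 - x) ^ (-α) * x * α * (1 - t * x) ^ (-α - 1))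
      (x ^ (-α) * (1 - x) ^ (-α) * x * α * (-x * (-α - 1) * (1 - l * x) ^ (-α - 1 - 1))) l := by
    have hlin : HasDerivAt (fun s : ℝ => 1 - s * x) (-x) l := by
      simpa using ((hasDerivAt_id l).mul_const x).const_sub 1
    exact (hlin.rpow_const (p := -α - 1) (Or.inl hlx.ne')).const_mul _
  have hd2 : deriv (deriv (fun t : ℝ => Fint α t x)) l
      = x ^ (-α) * (1 - x) ^ (-α) * x * α * (-x * (-α - 1) * (1 - l * x) ^ (-α - 1 - 1)) := by
    rw [hev.deriv_eq]; exact hF2.deriv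
  have hd1 : deriv (fun t : ℝ => Fint α t x) l
      = x ^ (-α) * (1 - x) ^ (-α) * x * α * (1 - l * x) ^ (-α - 1) := (hF1 l hlx).deriv
  -- derivative of H in x
  have h1 : HasDerivAt (fun u : ℝ => u ^ (1 - α)) (1 * (1 - α) * x ^ (1 - α - 1)) x :=
    (hasDerivAt_id x).rpow_const (Or.inl hx0.ne')
  have h2 : HasDerivAt (fun u : ℝ => (1 - u) ^ (1 - α)) (-1 * (1 - α) * (1 - x) ^ (1 - α - 1)) x :=
    ((hasDerivAt_id x).const_sub 1).rpow_const (Or.inl hx1'.ne')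
  have hlin3 : HasDerivAt (fun u : ℝ => 1 - l * u) (-l) x := by
    simpa using ((hasDerivAt_id x).const_mul l).const_sub 1
  have h3 : HasDerivAt (fun u : ℝ => (1 - l * u) ^ (-1 - α))
      (-l * (-1 - α) * (1 - l * x) ^ (-1 - α - 1)) x :=
    hlin3.rpow_const (Or.inl hlx.ne')
  have hH : deriv (fun u : ℝ => Hint α l u)
      = deriv (fun u : ℝ => -α * (u ^ (1 - α) * (1 - u) ^ (1 - α) * (1 - l * u) ^ (-1 - α))) := by
    simp only [Hint]
  have hdH : deriv (fun u : ℝ => Hint α l u) x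
      = -α * ((1 * (1 - α) * x ^ (1 - α - 1) * (1 - x) ^ (1 - α)
          + x ^ (1 - α) * (-1 * (1 - α) * (1 - x) ^ (1 - α - 1))) * (1 - l * x) ^ (-1 - α)
          + x ^ (1 - α) * (1 - x) ^ (1 - α) * (-l * (-1 - α) * (1 - l * x) ^ (-1 - α - 1))) := by
    rw [hH]
    exact (((h1.mul h2).mul h3).const_mul (-α)).deriv
  rw [hd2, hd1, hdH, Fint]
  -- normalize exponents
  have e1 : (1 : ℝ) - α - 1 = -α := by ring
  have e2 : (-1 : ℝ) - α = -α - 1 := by ring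
  rw [e1, e2]
  rw [Real.rpow_sub_one hlx.ne' (-α - 1), Real.rpow_sub_one hlx.ne' (-α),
    Real.rpow_sub hx0, Real.rpow_sub hx1', Real.rpow_one, Real.rpow_one,
    Real.rpow_neg hx0.le, Real.rpow_neg hx1'.le, Real.rpow_neg hlx.le]
  have hXa : (0 : ℝ) < x ^ α := Real.rpow_pos_of_pos hx0 α
  have hYa : (0 : ℝ) < (1 - x) ^ α := Real.rpow_pos_of_pos hx1' α
  have hZa : (0 : ℝ) < (1 - l * x) ^ α := Real.rpow_pos_of_pos hlx α
  field_simp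
  ring
end

section
/- Let α be a real number with 0 < α < 1. For (λ₁, λ₂) ∈ (0,1)² define I(λ₁, λ₂) = ∫_0^1 ( ∫_0^x x^{−α}(1−x)^{−α}(1−λ₁x)^{−α} · y^{α−1}(1−y)^{α−1}(1−λ₂y)^{α−1} dy ) dx. Then for all (λ₁, λ₂) ∈ (0,1)² with λ₁ ≠ λ₂: λ₂(1−λ₂)·(∂²I/∂λ₂²)(λ₁,λ₂) + 2(α−λ₂)·(∂I/∂λ₂)(λ₁,λ₂) − α(1−α)·I(λ₁,λ₂) = (1/(λ₁−λ₂)) · ( ((1−λ₁)/(1−λ₂))^{1−α} − 1 ). -/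
open Real

open MeasureTheory intervalIntegral Set Metric Filter

noncomputable section PFaux

/-- kernel `ψ y = y^(α-1) (1-y)^(α-1)` -/
def psiK (α y : ℝ) : ℝ := y ^ (α-1) * (1-y) ^ (α-1)

def gK (α l₁ x : ℝ) : ℝ := x ^ (-α) * (1-x) ^ (-α) * (1 - l₁*x) ^ (-α)

def f0K (α t y : ℝ) : ℝ := y ^ (α-1) * (1-y) ^ (α-1) * (1 - t*y) ^ (α-1)
def f1K (α t y : ℝ) : ℝ := (1-α) * (y ^ α * (1-y) ^ (α-1) * (1 - t*y) ^ (α-2))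
def f2K (α t y : ℝ) : ℝ := (1-α) * (2-α) * (y ^ (α+1) * (1-y) ^ (α-1) * (1 - t*y) ^ (α-3))
def hbK (α t x : ℝ) : ℝ := (α-1) * (x ^ α * (1-x) ^ α * (1 - t*x) ^ (α-2))

def J0K (α t x : ℝ) : ℝ := ∫ y in (0:ℝ)..x, f0K α t y
def J1K (α t x : ℝ) : ℝ := ∫ y in (0:ℝ)..x, f1K α t y
def J2K (α t x : ℝ) : ℝ := ∫ y in (0:ℝ)..x, f2K α t y

variable {α l₁ t x y b : ℝ}

lemma meas_f0 (α t : ℝ) : Measurable (f0K α t) := by unfold f0K; fun_prop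
lemma meas_f1 (α t : ℝ) : Measurable (f1K α t) := by unfold f1K; fun_prop
lemma meas_f2 (α t : ℝ) : Measurable (f2K α t) := by unfold f2K; fun_prop
lemma meas_psi (α : ℝ) : Measurable (psiK α) := by unfold psiK; fun_prop

/-- the comparison function dominating ψ -/
def baseK (α y : ℝ) : ℝ := 2 ^ (1-α) * (y ^ (α-1) + (1-y) ^ (α-1))

lemma base_int (hα0 : 0 < α) : IntervalIntegrable (baseK α) volume 0 1 := by
  have h1 : IntervalIntegrable (fun y : ℝ => y ^ (α-1)) volume 0 1 :=
    intervalIntegral.intervalIntegrable_rpow' (by linarith)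
  have h2 : IntervalIntegrable (fun y : ℝ => (1-y) ^ (α-1)) volume 0 1 := by
    have := (intervalIntegral.intervalIntegrable_rpow' (a := 0) (b := 1)
      (r := α-1) (by linarith)).comp_sub_left 1
    simpa using this.symm
  exact (h1.add h2).const_mul ((2:ℝ) ^ (1-α))

lemma psi_nonneg (hy0 : 0 ≤ y) (hy1 : y ≤ 1) : 0 ≤ psiK α y :=
  mul_nonneg (rpow_nonneg hy0 _) (rpow_nonneg (by linarith) _)

lemma psi_le_base (hα1 : α < 1) (hy0 : 0 ≤ y) (hy1 : y ≤ 1) : psiK α y ≤ baseK α y := by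
  have hy0' : (0:ℝ) ≤ 1 - y := by linarith
  have key : ((1:ℝ)/2) ^ (α-1) = (2:ℝ) ^ (1-α) := by
    rw [one_div, Real.inv_rpow (by norm_num), ← Real.rpow_neg (by norm_num), neg_sub]
  rcases le_total y (1/2) with h | h
  · have hb : (1-y) ^ (α-1) ≤ (2:ℝ) ^ (1-α) := by
      rw [← key]
      exact Real.rpow_le_rpow_of_nonpos (by norm_num) (by linarith) (by linarith)
    have : psiK α y ≤ 2 ^ (1-α) * y ^ (α-1) :=
      (mul_le_mul_of_nonneg_left hb (rpow_nonneg hy0 _)).trans_eq (mul_comm _ _)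
    refine this.trans ?_
    unfold baseK
    have : (0:ℝ) ≤ 2 ^ (1-α) * (1-y) ^ (α-1) :=
      mul_nonneg (rpow_nonneg (by norm_num) _) (rpow_nonneg hy0' _)
    nlinarith [this]
  · have hb : y ^ (α-1) ≤ (2:ℝ) ^ (1-α) := by
      rw [← key]
      exact Real.rpow_le_rpow_of_nonpos (by norm_num) (by linarith) (by linarith)
    have : psiK α y ≤ 2 ^ (1-α) * (1-y) ^ (α-1) :=
      mul_le_mul_of_nonneg_right hb (rpow_nonneg hy0' _)
    refine this.trans ?_
    unfold baseK
    have : (0:ℝ) ≤ 2 ^ (1-α) * y ^ (α-1) :=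
      mul_nonneg (rpow_nonneg (by norm_num) _) (rpow_nonneg hy0 _)
    nlinarith [this]

lemma psi_int (hα0 : 0 < α) (hα1 : α < 1) (hx0 : 0 ≤ x) (hx1 : x ≤ 1) :
    IntervalIntegrable (psiK α) volume 0 x := by
  have hbase : IntervalIntegrable (baseK α) volume 0 x :=
    (base_int hα0).mono_set (by
      rw [Set.uIcc_of_le hx0, Set.uIcc_of_le (by norm_num : (0:ℝ) ≤ 1)]
      exact Set.Icc_subset_Icc le_rfl hx1)
  refine hbase.mono_fun' ((meas_psi α).aestronglyMeasurable) ?_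
  filter_upwards [MeasureTheory.ae_restrict_mem measurableSet_uIoc] with y hy
  rw [Set.uIoc_of_le hx0] at hy
  have h0 : 0 ≤ y := hy.1.le
  have h1 : y ≤ 1 := hy.2.trans hx1
  rw [Real.norm_eq_abs, abs_of_nonneg (psi_nonneg h0 h1)]
  exact psi_le_base hα1 h0 h1

def MbK (α b : ℝ) : ℝ := 2 * (1-b) ^ (α-3)

lemma bound_aux (hα1 : α < 1) (ht0 : 0 < t) (htb : t ≤ b) (hb1 : b < 1)
    (hy0 : 0 < y) (hy1 : y < 1) {c p q : ℝ} (hc0 : 0 ≤ c) (hc2 : c ≤ 2)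
    (hp : α-1 ≤ p) (hq3 : α-3 ≤ q) (hq0 : q ≤ 0) :
    c * (y ^ p * (1-y) ^ (α-1) * (1 - t*y) ^ q) ≤ MbK α b * psiK α y := by
  have hb0 : (0:ℝ) < 1 - b := by linarith
  have hty : 1 - b ≤ 1 - t*y := by nlinarith
  have hA : y ^ p ≤ y ^ (α-1) := Real.rpow_le_rpow_of_exponent_ge hy0 hy1.le hp
  have hB : (1 - t*y) ^ q ≤ (1-b) ^ (α-3) :=
    (Real.rpow_le_rpow_of_nonpos hb0 hty hq0).trans
      (Real.rpow_le_rpow_of_exponent_ge hb0 (by linarith) hq3)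
  have hC : y ^ p * (1-y) ^ (α-1) ≤ y ^ (α-1) * (1-y) ^ (α-1) :=
    mul_le_mul_of_nonneg_right hA (rpow_nonneg (by linarith) _)
  have hD : y ^ p * (1-y) ^ (α-1) * (1 - t*y) ^ q
      ≤ y ^ (α-1) * (1-y) ^ (α-1) * (1-b) ^ (α-3) :=
    mul_le_mul hC hB (rpow_nonneg (by nlinarith) _)
      (mul_nonneg (rpow_nonneg hy0.le _) (rpow_nonneg (by linarith) _))
  have := mul_le_mul hc2 hD
    (mul_nonneg (mul_nonneg (rpow_nonneg hy0.le _) (rpow_nonneg (by linarith) _))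
      (rpow_nonneg (by nlinarith) _)) (by norm_num)
  calc c * (y ^ p * (1-y) ^ (α-1) * (1 - t*y) ^ q)
      ≤ 2 * (y ^ (α-1) * (1-y) ^ (α-1) * (1-b) ^ (α-3)) := this
    _ = MbK α b * psiK α y := by unfold MbK psiK; ring

lemma f0_nonneg (hy0 : 0 ≤ y) (hy1 : y ≤ 1) (hty : t*y ≤ 1) : 0 ≤ f0K α t y := by
  unfold f0K
  have := rpow_nonneg hy0 (α-1)
  have := rpow_nonneg (by linarith : (0:ℝ) ≤ 1-y) (α-1)
  have := rpow_nonneg (by linarith : (0:ℝ) ≤ 1-t*y) (α-1)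
  positivity

lemma f1_nonneg (hα1 : α < 1) (hy0 : 0 ≤ y) (hy1 : y ≤ 1) (hty : t*y ≤ 1) : 0 ≤ f1K α t y := by
  unfold f1K
  have := rpow_nonneg hy0 α
  have := rpow_nonneg (by linarith : (0:ℝ) ≤ 1-y) (α-1)
  have := rpow_nonneg (by linarith : (0:ℝ) ≤ 1-t*y) (α-2)
  have h1 : (0:ℝ) ≤ 1 - α := by linarith
  positivity

lemma f2_nonneg (hα1 : α < 1) (hy0 : 0 ≤ y) (hy1 : y ≤ 1) (hty : t*y ≤ 1) : 0 ≤ f2K α t y := by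
  unfold f2K
  have := rpow_nonneg hy0 (α+1)
  have := rpow_nonneg (by linarith : (0:ℝ) ≤ 1-y) (α-1)
  have := rpow_nonneg (by linarith : (0:ℝ) ≤ 1-t*y) (α-3)
  have h1 : (0:ℝ) ≤ 1 - α := by linarith
  have h2 : (0:ℝ) ≤ 2 - α := by linarith
  positivity

lemma bound_f0 (hα0 : 0 < α) (hα1 : α < 1) (ht0 : 0 < t) (htb : t ≤ b) (hb1 : b < 1)
    (hy : y ∈ Set.Icc (0:ℝ) 1) : ‖f0K α t y‖ ≤ MbK α b * psiK α y := by
  obtain ⟨hy0, hy1⟩ := hy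
  rcases eq_or_lt_of_le hy0 with h0 | h0
  · simp [f0K, psiK, ← h0, Real.zero_rpow (show α-1 ≠ 0 by intro h; linarith)]
  rcases eq_or_lt_of_le hy1 with h1 | h1
  · simp [f0K, psiK, h1, Real.zero_rpow (show α-1 ≠ 0 by intro h; linarith)]
  have hty : t*y ≤ 1 := by nlinarith
  rw [Real.norm_eq_abs, abs_of_nonneg (f0_nonneg hy0 hy1 hty)]
  have := bound_aux (t := t) hα1 ht0 htb hb1 h0 h1 (c := 1) (p := α-1) (q := α-1)
    (by norm_num) (by norm_num) le_rfl (by linarith) (by linarith)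
  simpa [f0K] using this

lemma bound_f1 (hα0 : 0 < α) (hα1 : α < 1) (ht0 : 0 < t) (htb : t ≤ b) (hb1 : b < 1)
    (hy : y ∈ Set.Icc (0:ℝ) 1) : ‖f1K α t y‖ ≤ MbK α b * psiK α y := by
  obtain ⟨hy0, hy1⟩ := hy
  rcases eq_or_lt_of_le hy0 with h0 | h0
  · simp [f1K, psiK, ← h0, Real.zero_rpow hα0.ne', Real.zero_rpow (show α-1 ≠ 0 by intro h; linarith)]
  rcases eq_or_lt_of_le hy1 with h1 | h1
  · simp [f1K, psiK, h1, Real.zero_rpow (show α-1 ≠ 0 by intro h; linarith)]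
  have hty : t*y ≤ 1 := by nlinarith
  rw [Real.norm_eq_abs, abs_of_nonneg (f1_nonneg hα1 hy0 hy1 hty)]
  exact bound_aux (t := t) hα1 ht0 htb hb1 h0 h1 (c := 1-α) (p := α) (q := α-2)
    (by linarith) (by linarith) (by linarith) (by linarith) (by linarith)

lemma bound_f2 (hα0 : 0 < α) (hα1 : α < 1) (ht0 : 0 < t) (htb : t ≤ b) (hb1 : b < 1)
    (hy : y ∈ Set.Icc (0:ℝ) 1) : ‖f2K α t y‖ ≤ MbK α b * psiK α y := by
  obtain ⟨hy0, hy1⟩ := hy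
  rcases eq_or_lt_of_le hy0 with h0 | h0
  · simp [f2K, psiK, ← h0, Real.zero_rpow (show α+1 ≠ 0 by intro h; linarith),
      Real.zero_rpow (show α-1 ≠ 0 by intro h; linarith)]
  rcases eq_or_lt_of_le hy1 with h1 | h1
  · simp [f2K, psiK, h1, Real.zero_rpow (show α-1 ≠ 0 by intro h; linarith)]
  have hty : t*y ≤ 1 := by nlinarith
  rw [Real.norm_eq_abs, abs_of_nonneg (f2_nonneg hα1 hy0 hy1 hty)]
  have : (1-α) * (2-α) ≤ 2 := by nlinarith
  have h := bound_aux (t := t) hα1 ht0 htb hb1 h0 h1 (c := (1-α)*(2-α)) (p := α+1) (q := α-3)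
    (by nlinarith) this (by linarith) le_rfl (by linarith)
  calc f2K α t y = (1-α)*(2-α) * (y ^ (α+1) * (1-y) ^ (α-1) * (1 - t*y) ^ (α-3)) := by
        unfold f2K; ring
    _ ≤ MbK α b * psiK α y := h

lemma int_psi_mul (hα0 : 0 < α) (hα1 : α < 1) (hx0 : 0 ≤ x) (hx1 : x ≤ 1) (c : ℝ) :
    IntervalIntegrable (fun y => c * psiK α y) volume 0 x :=
  (psi_int hα0 hα1 hx0 hx1).const_mul c

lemma int_f0 (hα0 : 0 < α) (hα1 : α < 1) (ht0 : 0 < t) (htb : t ≤ b) (hb1 : b < 1)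
    (hx0 : 0 ≤ x) (hx1 : x ≤ 1) : IntervalIntegrable (f0K α t) volume 0 x := by
  refine (int_psi_mul hα0 hα1 hx0 hx1 (MbK α b)).mono_fun'
    ((meas_f0 α t).aestronglyMeasurable) ?_
  filter_upwards [MeasureTheory.ae_restrict_mem measurableSet_uIoc] with y hy
  rw [Set.uIoc_of_le hx0] at hy
  exact bound_f0 hα0 hα1 ht0 htb hb1 ⟨hy.1.le, hy.2.trans hx1⟩

lemma int_f1 (hα0 : 0 < α) (hα1 : α < 1) (ht0 : 0 < t) (htb : t ≤ b) (hb1 : b < 1)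
    (hx0 : 0 ≤ x) (hx1 : x ≤ 1) : IntervalIntegrable (f1K α t) volume 0 x := by
  refine (int_psi_mul hα0 hα1 hx0 hx1 (MbK α b)).mono_fun'
    ((meas_f1 α t).aestronglyMeasurable) ?_
  filter_upwards [MeasureTheory.ae_restrict_mem measurableSet_uIoc] with y hy
  rw [Set.uIoc_of_le hx0] at hy
  exact bound_f1 hα0 hα1 ht0 htb hb1 ⟨hy.1.le, hy.2.trans hx1⟩

lemma int_f2 (hα0 : 0 < α) (hα1 : α < 1) (ht0 : 0 < t) (htb : t ≤ b) (hb1 : b < 1)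
    (hx0 : 0 ≤ x) (hx1 : x ≤ 1) : IntervalIntegrable (f2K α t) volume 0 x := by
  refine (int_psi_mul hα0 hα1 hx0 hx1 (MbK α b)).mono_fun'
    ((meas_f2 α t).aestronglyMeasurable) ?_
  filter_upwards [MeasureTheory.ae_restrict_mem measurableSet_uIoc] with y hy
  rw [Set.uIoc_of_le hx0] at hy
  exact bound_f2 hα0 hα1 ht0 htb hb1 ⟨hy.1.le, hy.2.trans hx1⟩

lemma psi_integral_le (hα0 : 0 < α) (hα1 : α < 1) (hx0 : 0 < x) (hx1 : x < 1) :
    ∫ y in (0:ℝ)..x, psiK α y ≤ (2:ℝ) ^ (2-α) / α * x ^ α := by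
  have h1 : ∫ y in (0:ℝ)..x, y ^ (α-1) = x ^ α / α := by
    rw [integral_rpow (Or.inl (by linarith))]
    rw [show α - 1 + 1 = α by ring, Real.zero_rpow hα0.ne']
    ring
  have h2 : ∫ y in (0:ℝ)..x, (1-y) ^ (α-1) = (1 - (1-x) ^ α) / α := by
    have hderiv : ∀ y ∈ Set.uIcc (0:ℝ) x,
        HasDerivAt (fun y : ℝ => -((1-y) ^ α) / α) ((1-y) ^ (α-1)) y := by
      intro y hy
      rw [Set.uIcc_of_le hx0.le] at hy
      have hy1 : (0:ℝ) < 1 - y := by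
        have := hy.2; linarith
      have hd : HasDerivAt (fun y : ℝ => 1 - y) (-1) y := by
        simpa using (hasDerivAt_id y).const_sub 1
      have := (hd.rpow_const (p := α) (Or.inl hy1.ne'))
      have h3 := (this.neg).div_const α
      refine h3.congr_deriv ?_
      field_simp
    have hint : IntervalIntegrable (fun y : ℝ => (1-y) ^ (α-1)) volume 0 x := by
      apply ContinuousOn.intervalIntegrable
      intro y hy
      rw [Set.uIcc_of_le hx0.le] at hy
      have hy1 : (0:ℝ) < 1 - y := by have := hy.2; linarith
      exact ((continuous_const.sub continuous_id).continuousOn.rpow_const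
        (fun z hz => Or.inl (by
          rw [Set.uIcc_of_le hx0.le] at hz
          have := hz.2
          have : (0:ℝ) < 1 - z := by linarith
          exact this.ne'))) y (by rwa [Set.uIcc_of_le hx0.le])
    rw [intervalIntegral.integral_eq_sub_of_hasDerivAt hderiv hint]
    simp only [sub_zero, sub_self]
    rw [Real.one_rpow]
    ring
  have hle : ∫ y in (0:ℝ)..x, psiK α y ≤ ∫ y in (0:ℝ)..x, baseK α y := by
    apply intervalIntegral.integral_mono_on hx0.le (psi_int hα0 hα1 hx0.le hx1.le)
      ((base_int hα0).mono_set (by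
        rw [Set.uIcc_of_le hx0.le, Set.uIcc_of_le (by norm_num : (0:ℝ) ≤ 1)]
        exact Set.Icc_subset_Icc le_rfl hx1.le))
    intro y hy
    exact psi_le_base hα1 hy.1 (hy.2.trans hx1.le)
  have hbase : ∫ y in (0:ℝ)..x, baseK α y
      = 2 ^ (1-α) * (x ^ α / α + (1 - (1-x) ^ α)/α) := by
    unfold baseK
    rw [intervalIntegral.integral_const_mul, intervalIntegral.integral_add
      (intervalIntegral.intervalIntegrable_rpow' (by linarith))
      (by
        have := (intervalIntegral.intervalIntegrable_rpow' (a := 1-x) (b := 1)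
          (r := α-1) (by linarith)).comp_sub_left 1
        simpa using this.symm), h1, h2]
  rw [hbase] at hle
  refine hle.trans ?_
  have hxx : 1 - (1-x) ^ α ≤ x ^ α := by
    have h4 : (1-x) ^ (1:ℝ) ≤ (1-x) ^ α :=
      Real.rpow_le_rpow_of_exponent_ge (by linarith) (by linarith) hα1.le
    have h5 : x ^ (1:ℝ) ≤ x ^ α := Real.rpow_le_rpow_of_exponent_ge hx0 hx1.le hα1.le
    rw [Real.rpow_one] at h4 h5
    linarith
  have h6 : (0:ℝ) < 2 ^ (1-α) := Real.rpow_pos_of_pos (by norm_num) _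
  have h7 : (2:ℝ) ^ (2-α) = 2 ^ (1-α) * 2 := by
    rw [show (2:ℝ) - α = (1-α) + 1 by ring, Real.rpow_add (by norm_num), Real.rpow_one]
  have h8 : x ^ α / α + (1 - (1-x) ^ α)/α ≤ 2 * x ^ α / α := by
    rw [← add_div, two_mul, add_div _ (x ^ α)]
    rw [← add_div]
    exact (div_le_div_iff_of_pos_right hα0).mpr (by linarith)
  calc 2 ^ (1-α) * (x ^ α / α + (1 - (1-x) ^ α)/α)
      ≤ 2 ^ (1-α) * (2 * x ^ α / α) := mul_le_mul_of_nonneg_left h8 h6.le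
    _ = 2 ^ (2-α) / α * x ^ α := by rw [h7]; ring


def CaK (α : ℝ) : ℝ := (2:ℝ) ^ (2-α) / α

lemma Mb_nonneg (hb1 : b < 1) : 0 ≤ MbK α b := by
  unfold MbK
  have : (0:ℝ) ≤ (1-b) ^ (α-3) := rpow_nonneg (by linarith) _
  linarith

/-- generic bound `|∫₀ˣ f| ≤ Mb · Cα · x^α` for `f` dominated by `Mb ψ` -/
lemma Jbound_generic {f : ℝ → ℝ} (hα0 : 0 < α) (hα1 : α < 1) (hb1 : b < 1)
    (hx0 : 0 < x) (hx1 : x < 1)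
    (hint : IntervalIntegrable f volume 0 x)
    (hbd : ∀ y ∈ Set.Icc (0:ℝ) 1, ‖f y‖ ≤ MbK α b * psiK α y) :
    |∫ y in (0:ℝ)..x, f y| ≤ MbK α b * CaK α * x ^ α := by
  have h1 : |∫ y in (0:ℝ)..x, f y| ≤ ∫ y in (0:ℝ)..x, ‖f y‖ := by
    rw [← Real.norm_eq_abs]
    exact intervalIntegral.norm_integral_le_integral_norm hx0.le
  have h2 : ∫ y in (0:ℝ)..x, ‖f y‖ ≤ ∫ y in (0:ℝ)..x, MbK α b * psiK α y := by
    apply intervalIntegral.integral_mono_on hx0.le hint.norm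
      (int_psi_mul hα0 hα1 hx0.le hx1.le _)
    intro y hy
    exact hbd y ⟨hy.1, hy.2.trans hx1.le⟩
  have h3 : ∫ y in (0:ℝ)..x, MbK α b * psiK α y
      ≤ MbK α b * (CaK α * x ^ α) := by
    rw [intervalIntegral.integral_const_mul]
    exact mul_le_mul_of_nonneg_left (psi_integral_le hα0 hα1 hx0 hx1) (Mb_nonneg hb1)
  calc |∫ y in (0:ℝ)..x, f y| ≤ _ := h1
    _ ≤ _ := h2
    _ ≤ MbK α b * (CaK α * x ^ α) := h3
    _ = MbK α b * CaK α * x ^ α := by ring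

lemma J0_bound (hα0 : 0 < α) (hα1 : α < 1) (ht0 : 0 < t) (htb : t ≤ b) (hb1 : b < 1)
    (hx0 : 0 < x) (hx1 : x < 1) : |J0K α t x| ≤ MbK α b * CaK α * x ^ α :=
  Jbound_generic hα0 hα1 hb1 hx0 hx1 (int_f0 hα0 hα1 ht0 htb hb1 hx0.le hx1.le)
    (fun y hy => bound_f0 hα0 hα1 ht0 htb hb1 hy)

lemma J1_bound (hα0 : 0 < α) (hα1 : α < 1) (ht0 : 0 < t) (htb : t ≤ b) (hb1 : b < 1)
    (hx0 : 0 < x) (hx1 : x < 1) : |J1K α t x| ≤ MbK α b * CaK α * x ^ α :=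
  Jbound_generic hα0 hα1 hb1 hx0 hx1 (int_f1 hα0 hα1 ht0 htb hb1 hx0.le hx1.le)
    (fun y hy => bound_f1 hα0 hα1 ht0 htb hb1 hy)

lemma J2_bound (hα0 : 0 < α) (hα1 : α < 1) (ht0 : 0 < t) (htb : t ≤ b) (hb1 : b < 1)
    (hx0 : 0 < x) (hx1 : x < 1) : |J2K α t x| ≤ MbK α b * CaK α * x ^ α :=
  Jbound_generic hα0 hα1 hb1 hx0 hx1 (int_f2 hα0 hα1 ht0 htb hb1 hx0.le hx1.le)
    (fun y hy => bound_f2 hα0 hα1 ht0 htb hb1 hy)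

/-- pointwise derivative in `t` of `f0` is `f1` -/
lemma hasDerivAt_f0 (hy0 : 0 < y) (hy1 : y < 1) (ht0 : 0 < t) (ht1 : t < 1) :
    HasDerivAt (fun s => f0K α s y) (f1K α t y) t := by
  have hty : (0:ℝ) < 1 - t*y := by nlinarith
  have hd : HasDerivAt (fun s : ℝ => 1 - s*y) (-y) t := by
    simpa using ((hasDerivAt_id t).mul_const y).const_sub 1
  have h2 := (hd.rpow_const (p := α-1) (Or.inl hty.ne')).const_mul
    (y ^ (α-1) * (1-y) ^ (α-1))
  refine h2.congr_deriv ?_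
  unfold f1K
  have hyα : y ^ α = y ^ (α-1) * y := by
    rw [← Real.rpow_add_one hy0.ne' (α-1)]; norm_num
  rw [show α - 1 - 1 = α - 2 by ring, hyα]
  ring

/-- pointwise derivative in `t` of `f1` is `f2` -/
lemma hasDerivAt_f1 (hy0 : 0 < y) (hy1 : y < 1) (ht0 : 0 < t) (ht1 : t < 1) :
    HasDerivAt (fun s => f1K α s y) (f2K α t y) t := by
  have hty : (0:ℝ) < 1 - t*y := by nlinarith
  have hd : HasDerivAt (fun s : ℝ => 1 - s*y) (-y) t := by
    simpa using ((hasDerivAt_id t).mul_const y).const_sub 1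
  have h2 := (hd.rpow_const (p := α-2) (Or.inl hty.ne')).const_mul
    ((1-α) * (y ^ α * (1-y) ^ (α-1)))
  have h3 : (fun s => f1K α s y) = fun s => (1-α) * (y ^ α * (1-y) ^ (α-1)) * (1 - s*y) ^ (α-2) := by
    funext s; unfold f1K; ring
  rw [h3]
  refine h2.congr_deriv ?_
  unfold f2K
  have hyα : y ^ (α+1) = y ^ α * y := Real.rpow_add_one hy0.ne' α
  rw [hyα, show α - 2 - 1 = α - 3 by ring]
  ring

lemma ballSub (ht0 : 0 < t) (ht1 : t < 1) {s : ℝ}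
    (hs : s ∈ ball t (min t (1-t) / 2)) : 0 < s ∧ s ≤ (1+t)/2 := by
  rw [mem_ball, Real.dist_eq] at hs
  have h2 := abs_lt.mp hs
  have hmt : min t (1-t) ≤ t := min_le_left _ _
  have hm1 : min t (1-t) ≤ 1 - t := min_le_right _ _
  constructor
  · nlinarith [h2.1]
  · nlinarith [h2.2]

lemma hasDerivAt_J0 (hα0 : 0 < α) (hα1 : α < 1) (ht0 : 0 < t) (ht1 : t < 1)
    (hx0 : 0 < x) (hx1 : x < 1) :
    HasDerivAt (fun s => J0K α s x) (J1K α t x) t := by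
  have hε0 : 0 < min t (1-t) / 2 := by
    have := lt_min ht0 (by linarith : (0:ℝ) < 1 - t)
    linarith
  have hb1 : (1+t)/2 < 1 := by linarith
  have htb : t ≤ (1+t)/2 := by linarith
  have H := intervalIntegral.hasDerivAt_integral_of_dominated_loc_of_deriv_le
    (F := fun s y => f0K α s y) (F' := fun s y => f1K α s y)
    (bound := fun y => MbK α ((1+t)/2) * psiK α y) (a := 0) (b := x) (x₀ := t)
    (Metric.ball_mem_nhds t hε0)
    (Filter.Eventually.of_forall fun s => (meas_f0 α s).aestronglyMeasurable)
    (int_f0 hα0 hα1 ht0 htb hb1 hx0.le hx1.le)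
    ((meas_f1 α t).aestronglyMeasurable)
    ?_ (int_psi_mul hα0 hα1 hx0.le hx1.le _) ?_
  · exact H.2
  · refine Filter.Eventually.of_forall fun y hy s hs => ?_
    rw [Set.uIoc_of_le hx0.le] at hy
    obtain ⟨hs0, hsb⟩ := ballSub ht0 ht1 hs
    exact bound_f1 hα0 hα1 hs0 hsb hb1 ⟨hy.1.le, hy.2.trans hx1.le⟩
  · refine Filter.Eventually.of_forall fun y hy s hs => ?_
    rw [Set.uIoc_of_le hx0.le] at hy
    obtain ⟨hs0, hsb⟩ := ballSub ht0 ht1 hs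
    exact hasDerivAt_f0 hy.1 (lt_of_le_of_lt hy.2 hx1) hs0 (lt_of_le_of_lt hsb hb1)

lemma hasDerivAt_J1 (hα0 : 0 < α) (hα1 : α < 1) (ht0 : 0 < t) (ht1 : t < 1)
    (hx0 : 0 < x) (hx1 : x < 1) :
    HasDerivAt (fun s => J1K α s x) (J2K α t x) t := by
  have hε0 : 0 < min t (1-t) / 2 := by
    have := lt_min ht0 (by linarith : (0:ℝ) < 1 - t)
    linarith
  have hb1 : (1+t)/2 < 1 := by linarith
  have htb : t ≤ (1+t)/2 := by linarith
  have H := intervalIntegral.hasDerivAt_integral_of_dominated_loc_of_deriv_le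
    (F := fun s y => f1K α s y) (F' := fun s y => f2K α s y)
    (bound := fun y => MbK α ((1+t)/2) * psiK α y) (a := 0) (b := x) (x₀ := t)
    (Metric.ball_mem_nhds t hε0)
    (Filter.Eventually.of_forall fun s => (meas_f1 α s).aestronglyMeasurable)
    (int_f1 hα0 hα1 ht0 htb hb1 hx0.le hx1.le)
    ((meas_f2 α t).aestronglyMeasurable)
    ?_ (int_psi_mul hα0 hα1 hx0.le hx1.le _) ?_
  · exact H.2
  · refine Filter.Eventually.of_forall fun y hy s hs => ?_
    rw [Set.uIoc_of_le hx0.le] at hy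
    obtain ⟨hs0, hsb⟩ := ballSub ht0 ht1 hs
    exact bound_f2 hα0 hα1 hs0 hsb hb1 ⟨hy.1.le, hy.2.trans hx1.le⟩
  · refine Filter.Eventually.of_forall fun y hy s hs => ?_
    rw [Set.uIoc_of_le hx0.le] at hy
    obtain ⟨hs0, hsb⟩ := ballSub ht0 ht1 hs
    exact hasDerivAt_f1 hy.1 (lt_of_le_of_lt hy.2 hx1) hs0 (lt_of_le_of_lt hsb hb1)

/-- the `y`-derivative of the boundary function equals the Picard–Fuchs combination -/
lemma hasDerivAt_hb (hα0 : 0 < α) (hα1 : α < 1) (ht0 : 0 < t) (ht1 : t < 1)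
    (hy0 : 0 < y) (hy1 : y < 1) :
    HasDerivAt (fun z => hbK α t z)
      (t*(1-t) * f2K α t y + 2*(α-t) * f1K α t y - α*(1-α) * f0K α t y) y := by
  have h1y : (0:ℝ) < 1 - y := by linarith
  have hty : (0:ℝ) < 1 - t*y := by nlinarith
  have hu : HasDerivAt (fun z : ℝ => z ^ α) (α * y ^ (α-1)) y :=
    Real.hasDerivAt_rpow_const (Or.inl hy0.ne')
  have hv : HasDerivAt (fun z : ℝ => (1-z) ^ α) (-1 * α * (1-y) ^ (α-1)) y := by
    have hd : HasDerivAt (fun z : ℝ => 1 - z) (-1) y := by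
      simpa using (hasDerivAt_id y).const_sub 1
    exact hd.rpow_const (Or.inl h1y.ne')
  have hw : HasDerivAt (fun z : ℝ => (1-t*z) ^ (α-2)) (-t * (α-2) * (1-t*y) ^ (α-2-1)) y := by
    have hd : HasDerivAt (fun z : ℝ => 1 - t*z) (-t) y := by
      simpa using ((hasDerivAt_id y).const_mul t).const_sub 1
    exact hd.rpow_const (Or.inl hty.ne')
  have H := (((hu.mul hv).mul hw).const_mul (α-1))
  have hsh : (fun z => hbK α t z)
      = fun z => (α-1) * (z ^ α * (1-z) ^ α * (1-t*z) ^ (α-2)) := by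
    funext z; unfold hbK; ring
  rw [hsh]
  refine H.congr_deriv ?_
  simp only [Pi.mul_apply]
  have hE : y ^ (α+1) = y ^ α * y := Real.rpow_add_one hy0.ne' α
  have hA : y ^ α = y ^ (α-1) * y := by
    rw [← Real.rpow_add_one hy0.ne' (α-1)]; norm_num
  have hB : (1-y) ^ α = (1-y) ^ (α-1) * (1-y) := by
    rw [← Real.rpow_add_one h1y.ne' (α-1)]; norm_num
  have hD : (1-t*y) ^ (α-1) = (1-t*y) ^ (α-2) * (1-t*y) := by
    rw [← Real.rpow_add_one hty.ne' (α-2)]; congr 1; ring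
  have hC : (1-t*y) ^ (α-2) = (1-t*y) ^ (α-3) * (1-t*y) := by
    rw [← Real.rpow_add_one hty.ne' (α-3)]; congr 1; ring
  unfold f0K f1K f2K
  rw [show α - 2 - 1 = α - 3 by ring, hE, hD, hC, hB, hA]
  ring

lemma hb_zero (hα0 : 0 < α) : hbK α t 0 = 0 := by
  simp [hbK, Real.zero_rpow hα0.ne']

/-- FTC: the PF combination of the inner integrals equals `hb` -/
lemma Jcomb (hα0 : 0 < α) (hα1 : α < 1) (ht0 : 0 < t) (ht1 : t < 1)
    (hx0 : 0 < x) (hx1 : x < 1) :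
    t*(1-t) * J2K α t x + 2*(α-t) * J1K α t x - α*(1-α) * J0K α t x = hbK α t x := by
  have hint0 : IntervalIntegrable (f0K α t) volume 0 x :=
    int_f0 hα0 hα1 ht0 le_rfl ht1 hx0.le hx1.le
  have hint1 : IntervalIntegrable (f1K α t) volume 0 x :=
    int_f1 hα0 hα1 ht0 le_rfl ht1 hx0.le hx1.le
  have hint2 : IntervalIntegrable (f2K α t) volume 0 x :=
    int_f2 hα0 hα1 ht0 le_rfl ht1 hx0.le hx1.le
  have hcomb : IntervalIntegrable
      (fun y => t*(1-t) * f2K α t y + 2*(α-t) * f1K α t y - α*(1-α) * f0K α t y) volume 0 x :=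
    ((hint2.const_mul _).add (hint1.const_mul _)).sub (hint0.const_mul _)
  have htx : (0:ℝ) < 1 - t*x := by nlinarith
  have hcont0 : ContinuousAt (fun z => hbK α t z) 0 := by
    unfold hbK
    refine continuousAt_const.mul (ContinuousAt.mul (ContinuousAt.mul ?_ ?_) ?_)
    · exact Real.continuousAt_rpow_const _ _ (Or.inr hα0.le)
    · exact ((continuous_const.sub continuous_id).continuousAt).rpow_const (Or.inl (by norm_num))
    · exact ((continuous_const.sub (continuous_const.mul continuous_id)).continuousAt).rpow_const
        (Or.inl (by norm_num))
  have hcontx : ContinuousAt (fun z => hbK α t z) x := by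
    unfold hbK
    refine continuousAt_const.mul (ContinuousAt.mul (ContinuousAt.mul ?_ ?_) ?_)
    · exact Real.continuousAt_rpow_const _ _ (Or.inl hx0.ne')
    · exact ((continuous_const.sub continuous_id).continuousAt).rpow_const
        (Or.inl (by intro h; simp only [Pi.sub_apply, id] at h; nlinarith))
    · exact ((continuous_const.sub (continuous_const.mul continuous_id)).continuousAt).rpow_const
        (Or.inl (by simpa using htx.ne'))
  have hFTC := intervalIntegral.integral_eq_sub_of_hasDerivAt_of_tendsto (f := fun z => hbK α t z)
    (f' := fun y => t*(1-t) * f2K α t y + 2*(α-t) * f1K α t y - α*(1-α) * f0K α t y)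
    hx0 (fun y hy => hasDerivAt_hb hα0 hα1 ht0 ht1 hy.1 (hy.2.trans hx1)) hcomb
    (by
      have := hcont0.tendsto
      rw [hb_zero hα0] at this
      exact this.mono_left nhdsWithin_le_nhds)
    (hcontx.tendsto.mono_left nhdsWithin_le_nhds)
  have e2 : t*(1-t) * J2K α t x = ∫ y in (0:ℝ)..x, t*(1-t) * f2K α t y :=
    (intervalIntegral.integral_const_mul _ _).symm
  have e1 : 2*(α-t) * J1K α t x = ∫ y in (0:ℝ)..x, 2*(α-t) * f1K α t y :=
    (intervalIntegral.integral_const_mul _ _).symm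
  have e0 : α*(1-α) * J0K α t x = ∫ y in (0:ℝ)..x, α*(1-α) * f0K α t y :=
    (intervalIntegral.integral_const_mul _ _).symm
  rw [e0, e1, e2, ← intervalIntegral.integral_add (hint2.const_mul _) (hint1.const_mul _),
    ← intervalIntegral.integral_sub ((hint2.const_mul _).add (hint1.const_mul _))
      (hint0.const_mul _), hFTC]
  simp

lemma meas_g (α l₁ : ℝ) : Measurable (gK α l₁) := by unfold gK; fun_prop

lemma contJ_generic {f : ℝ → ℝ} (hint : IntervalIntegrable f volume 0 1) :
    ContinuousOn (fun x => ∫ y in (0:ℝ)..x, f y) (Set.Icc (0:ℝ) 1) := by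
  have h : IntegrableOn f (Set.uIcc (0:ℝ) 1) volume := by
    rw [Set.uIcc_of_le (by norm_num : (0:ℝ) ≤ 1)]
    rw [integrableOn_Icc_iff_integrableOn_Ioc]
    exact (intervalIntegrable_iff_integrableOn_Ioc_of_le (by norm_num)).mp hint
  have := intervalIntegral.continuousOn_primitive_interval h
  rwa [Set.uIcc_of_le (by norm_num : (0:ℝ) ≤ 1)] at this

lemma aesm_gJ {f : ℝ → ℝ} (α l₁ : ℝ) (hint : IntervalIntegrable f volume 0 1) :
    AEStronglyMeasurable (fun x => gK α l₁ x * ∫ y in (0:ℝ)..x, f y)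
      (volume.restrict (Set.uIoc (0:ℝ) 1)) := by
  have h1 : AEStronglyMeasurable (fun x => ∫ y in (0:ℝ)..x, f y)
      (volume.restrict (Set.uIoc (0:ℝ) 1)) := by
    have h2 : AEStronglyMeasurable (fun x => ∫ y in (0:ℝ)..x, f y)
        (volume.restrict (Set.Icc (0:ℝ) 1)) :=
      (contJ_generic hint).aestronglyMeasurable measurableSet_Icc
    refine h2.mono_measure (Measure.restrict_mono ?_ le_rfl)
    rw [Set.uIoc_of_le (by norm_num : (0:ℝ) ≤ 1)]
    exact Set.Ioc_subset_Icc_self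
  exact ((meas_g α l₁).aestronglyMeasurable).mul h1

/-- the dominating function for the outer integral -/
def phiK (α l₁ b : ℝ) (x : ℝ) : ℝ := MbK α b * CaK α * (1-l₁) ^ (-α) * (1-x) ^ (-α)

lemma phi_int (hα1 : α < 1) : IntervalIntegrable (phiK α l₁ b) volume 0 1 := by
  have h2 : IntervalIntegrable (fun y : ℝ => (1-y) ^ (-α)) volume 0 1 := by
    have := (intervalIntegral.intervalIntegrable_rpow' (a := 0) (b := 1)
      (r := -α) (by linarith)).comp_sub_left 1
    simpa using this.symm
  have h3 := h2.const_mul (MbK α b * CaK α * (1-l₁) ^ (-α))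
  have h4 : phiK α l₁ b = fun x => MbK α b * CaK α * (1-l₁) ^ (-α) * (1-x) ^ (-α) := rfl
  rw [h4]
  exact h3

lemma g_nonneg (hx0 : 0 < x) (hx1 : x < 1) (hl₁ : l₁ ∈ Set.Ioo (0:ℝ) 1) : 0 ≤ gK α l₁ x := by
  unfold gK
  have := rpow_nonneg hx0.le (-α)
  have := rpow_nonneg (by linarith : (0:ℝ) ≤ 1-x) (-α)
  have : (0:ℝ) ≤ 1 - l₁*x := by nlinarith [hl₁.1, hl₁.2]
  positivity

lemma gJ_bound {J : ℝ} (hα0 : 0 < α) (hα1 : α < 1) (hl₁ : l₁ ∈ Set.Ioo (0:ℝ) 1) (hb1 : b < 1)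
    (hx0 : 0 < x) (hx1 : x < 1) (hJ : |J| ≤ MbK α b * CaK α * x ^ α) :
    ‖gK α l₁ x * J‖ ≤ phiK α l₁ b x := by
  have hg : 0 ≤ gK α l₁ x := g_nonneg hx0 hx1 hl₁
  have hl₁x : (0:ℝ) < 1 - l₁*x := by nlinarith [hl₁.1, hl₁.2]
  have hl₁' : (0:ℝ) < 1 - l₁ := by linarith [hl₁.2]
  rw [norm_mul, Real.norm_eq_abs, Real.norm_eq_abs, abs_of_nonneg hg]
  have step1 : gK α l₁ x * |J| ≤ gK α l₁ x * (MbK α b * CaK α * x ^ α) :=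
    mul_le_mul_of_nonneg_left hJ hg
  refine step1.trans ?_
  have hxa : x ^ (-α) * x ^ α = 1 := by
    rw [← Real.rpow_add hx0]; simp
  have hmono : (1 - l₁*x) ^ (-α) ≤ (1-l₁) ^ (-α) := by
    apply Real.rpow_le_rpow_of_nonpos hl₁' (by nlinarith [hl₁.1]) (by linarith)
  have hMb := Mb_nonneg (α := α) hb1
  have hCa : 0 ≤ CaK α := by
    unfold CaK
    have := rpow_nonneg (by norm_num : (0:ℝ) ≤ 2) (2-α)
    positivity
  have h1x : (0:ℝ) ≤ (1-x) ^ (-α) := rpow_nonneg (by linarith) _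
  calc gK α l₁ x * (MbK α b * CaK α * x ^ α)
      = MbK α b * CaK α * (x ^ (-α) * x ^ α) * ((1-x) ^ (-α) * (1 - l₁*x) ^ (-α)) := by
        unfold gK; ring
    _ = MbK α b * CaK α * ((1-x) ^ (-α) * (1 - l₁*x) ^ (-α)) := by rw [hxa]; ring
    _ ≤ MbK α b * CaK α * ((1-x) ^ (-α) * (1-l₁) ^ (-α)) := by
        apply mul_le_mul_of_nonneg_left _ (mul_nonneg hMb hCa)
        exact mul_le_mul_of_nonneg_left hmono h1x
    _ = phiK α l₁ b x := by unfold phiK; ring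

lemma ae_ne_one {S : Set ℝ} : ∀ᵐ x ∂(volume.restrict S), x ≠ (1:ℝ) := by
  refine MeasureTheory.ae_restrict_of_ae ?_
  rw [MeasureTheory.ae_iff]
  have : {x : ℝ | ¬ x ≠ 1} = {1} := by ext z; simp
  rw [this]
  exact Real.volume_singleton

lemma ae_ne_one' : ∀ᵐ x : ℝ ∂volume, x ≠ (1:ℝ) := by
  rw [MeasureTheory.ae_iff]
  have : {x : ℝ | ¬ x ≠ 1} = {1} := by ext z; simp
  rw [this]
  exact Real.volume_singleton

lemma ballSub2 (hl₂0 : 0 < l₂) (hl₂1 : l₂ < 1) (ht : dist t l₂ < min l₂ (1-l₂)/4)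
    {s : ℝ} (hs : s ∈ ball t (min l₂ (1-l₂)/4)) : 0 < s ∧ s ≤ (1+l₂)/2 := by
  rw [mem_ball, Real.dist_eq] at hs
  rw [Real.dist_eq] at ht
  have h1 := abs_lt.mp hs
  have h2 := abs_lt.mp ht
  have hmt : min l₂ (1-l₂) ≤ l₂ := min_le_left _ _
  have hm1 : min l₂ (1-l₂) ≤ 1 - l₂ := min_le_right _ _
  constructor
  · nlinarith [h1.1, h2.1]
  · nlinarith [h1.2, h2.2]

lemma int_gJ0 {l₂ : ℝ} (hα0 : 0 < α) (hα1 : α < 1) (hl₁ : l₁ ∈ Set.Ioo (0:ℝ) 1)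
    (ht0 : 0 < t) (htb : t ≤ b) (hb1 : b < 1) :
    IntervalIntegrable (fun x => gK α l₁ x * J0K α t x) volume 0 1 := by
  refine (phi_int (l₁ := l₁) (b := b) hα1).mono_fun'
    (aesm_gJ α l₁ (int_f0 hα0 hα1 ht0 htb hb1 (by norm_num) le_rfl)) ?_
  filter_upwards [MeasureTheory.ae_restrict_mem measurableSet_uIoc, ae_ne_one] with x hx hx1
  rw [Set.uIoc_of_le (by norm_num : (0:ℝ) ≤ 1)] at hx
  have hx1' : x < 1 := lt_of_le_of_ne hx.2 hx1
  exact gJ_bound hα0 hα1 hl₁ hb1 hx.1 hx1' (J0_bound hα0 hα1 ht0 htb hb1 hx.1 hx1')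

lemma hasDerivAt_G0 {l₂ : ℝ} (hα0 : 0 < α) (hα1 : α < 1) (hl₁ : l₁ ∈ Set.Ioo (0:ℝ) 1)
    (hl₂0 : 0 < l₂) (hl₂1 : l₂ < 1) (ht : dist t l₂ < min l₂ (1-l₂)/4) :
    IntervalIntegrable (fun x => gK α l₁ x * J1K α t x) volume 0 1 ∧
    HasDerivAt (fun s => ∫ x in (0:ℝ)..1, gK α l₁ x * J0K α s x)
      (∫ x in (0:ℝ)..1, gK α l₁ x * J1K α t x) t := by
  have hr0 : 0 < min l₂ (1-l₂)/4 := by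
    have := lt_min hl₂0 (by linarith : (0:ℝ) < 1 - l₂)
    linarith
  have hbb1 : (1+l₂)/2 < 1 := by linarith
  obtain ⟨ht0, htb⟩ := ballSub2 hl₂0 hl₂1 ht (mem_ball_self hr0)
  have H := intervalIntegral.hasDerivAt_integral_of_dominated_loc_of_deriv_le
    (F := fun s x => gK α l₁ x * J0K α s x) (F' := fun s x => gK α l₁ x * J1K α s x)
    (bound := phiK α l₁ ((1+l₂)/2)) (a := 0) (b := 1) (x₀ := t) (μ := volume)
    (Metric.ball_mem_nhds t hr0) ?_ (int_gJ0 (l₂ := l₂) hα0 hα1 hl₁ ht0 htb hbb1) ?_ ?_ (phi_int hα1) ?_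
  · exact H
  · filter_upwards [Metric.ball_mem_nhds t hr0] with s hs
    obtain ⟨hs0, hsb⟩ := ballSub2 hl₂0 hl₂1 ht hs
    exact aesm_gJ α l₁ (int_f0 hα0 hα1 hs0 hsb hbb1 (by norm_num) le_rfl)
  · exact aesm_gJ α l₁ (int_f1 hα0 hα1 ht0 htb hbb1 (by norm_num) le_rfl)
  · filter_upwards [ae_ne_one'] with x hx1
    intro hx s hs
    rw [Set.uIoc_of_le (by norm_num : (0:ℝ) ≤ 1)] at hx
    have hx1' : x < 1 := lt_of_le_of_ne hx.2 hx1
    obtain ⟨hs0, hsb⟩ := ballSub2 hl₂0 hl₂1 ht hs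
    exact gJ_bound hα0 hα1 hl₁ hbb1 hx.1 hx1' (J1_bound hα0 hα1 hs0 hsb hbb1 hx.1 hx1')
  · filter_upwards [ae_ne_one'] with x hx1
    intro hx s hs
    rw [Set.uIoc_of_le (by norm_num : (0:ℝ) ≤ 1)] at hx
    have hx1' : x < 1 := lt_of_le_of_ne hx.2 hx1
    obtain ⟨hs0, hsb⟩ := ballSub2 hl₂0 hl₂1 ht hs
    exact (hasDerivAt_J0 hα0 hα1 hs0 (lt_of_le_of_lt hsb hbb1) hx.1 hx1').const_mul (gK α l₁ x)

lemma hasDerivAt_G1 {l₂ : ℝ} (hα0 : 0 < α) (hα1 : α < 1) (hl₁ : l₁ ∈ Set.Ioo (0:ℝ) 1)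
    (hl₂0 : 0 < l₂) (hl₂1 : l₂ < 1) (ht : dist t l₂ < min l₂ (1-l₂)/4) :
    IntervalIntegrable (fun x => gK α l₁ x * J2K α t x) volume 0 1 ∧
    HasDerivAt (fun s => ∫ x in (0:ℝ)..1, gK α l₁ x * J1K α s x)
      (∫ x in (0:ℝ)..1, gK α l₁ x * J2K α t x) t := by
  have hr0 : 0 < min l₂ (1-l₂)/4 := by
    have := lt_min hl₂0 (by linarith : (0:ℝ) < 1 - l₂)
    linarith
  have hbb1 : (1+l₂)/2 < 1 := by linarith
  obtain ⟨ht0, htb⟩ := ballSub2 hl₂0 hl₂1 ht (mem_ball_self hr0)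
  have hFint : IntervalIntegrable (fun x => gK α l₁ x * J1K α t x) volume 0 1 :=
    (hasDerivAt_G0 hα0 hα1 hl₁ hl₂0 hl₂1 ht).1
  have H := intervalIntegral.hasDerivAt_integral_of_dominated_loc_of_deriv_le
    (F := fun s x => gK α l₁ x * J1K α s x) (F' := fun s x => gK α l₁ x * J2K α s x)
    (bound := phiK α l₁ ((1+l₂)/2)) (a := 0) (b := 1) (x₀ := t) (μ := volume)
    (Metric.ball_mem_nhds t hr0) ?_ hFint ?_ ?_ (phi_int hα1) ?_
  · exact H
  · filter_upwards [Metric.ball_mem_nhds t hr0] with s hs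
    obtain ⟨hs0, hsb⟩ := ballSub2 hl₂0 hl₂1 ht hs
    exact aesm_gJ α l₁ (int_f1 hα0 hα1 hs0 hsb hbb1 (by norm_num) le_rfl)
  · exact aesm_gJ α l₁ (int_f2 hα0 hα1 ht0 htb hbb1 (by norm_num) le_rfl)
  · filter_upwards [ae_ne_one'] with x hx1
    intro hx s hs
    rw [Set.uIoc_of_le (by norm_num : (0:ℝ) ≤ 1)] at hx
    have hx1' : x < 1 := lt_of_le_of_ne hx.2 hx1
    obtain ⟨hs0, hsb⟩ := ballSub2 hl₂0 hl₂1 ht hs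
    exact gJ_bound hα0 hα1 hl₁ hbb1 hx.1 hx1' (J2_bound hα0 hα1 hs0 hsb hbb1 hx.1 hx1')
  · filter_upwards [ae_ne_one'] with x hx1
    intro hx s hs
    rw [Set.uIoc_of_le (by norm_num : (0:ℝ) ≤ 1)] at hx
    have hx1' : x < 1 := lt_of_le_of_ne hx.2 hx1
    obtain ⟨hs0, hsb⟩ := ballSub2 hl₂0 hl₂1 ht hs
    exact (hasDerivAt_J1 hα0 hα1 hs0 (lt_of_le_of_lt hsb hbb1) hx.1 hx1').const_mul (gK α l₁ x)

lemma final_integral {l₂ : ℝ} (hα0 : 0 < α) (hα1 : α < 1) (hl₁ : l₁ ∈ Set.Ioo (0:ℝ) 1)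
    (hl₂ : l₂ ∈ Set.Ioo (0:ℝ) 1) (hne : l₁ ≠ l₂) :
    ∫ x in (0:ℝ)..1, (α-1) * ((1 - l₁*x) ^ (-α) * (1 - l₂*x) ^ (α-2))
      = (1/(l₁-l₂)) * (((1-l₁)/(1-l₂)) ^ (1-α) - 1) := by
  obtain ⟨hl₁0, hl₁1⟩ := hl₁
  obtain ⟨hl₂0, hl₂1⟩ := hl₂
  have hsub : l₁ - l₂ ≠ 0 := sub_ne_zero.mpr hne
  set Φ : ℝ → ℝ := fun x => (1/(l₁-l₂)) * ((1 - l₁*x)/(1 - l₂*x)) ^ (1-α) with hΦ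
  have hderiv : ∀ x ∈ Set.uIcc (0:ℝ) 1,
      HasDerivAt Φ ((α-1) * ((1 - l₁*x) ^ (-α) * (1 - l₂*x) ^ (α-2))) x := by
    intro x hx
    rw [Set.uIcc_of_le (by norm_num : (0:ℝ) ≤ 1)] at hx
    obtain ⟨hx0, hx1⟩ := hx
    have hu0 : (0:ℝ) < 1 - l₁*x := by nlinarith
    have hv0 : (0:ℝ) < 1 - l₂*x := by nlinarith
    have hu : HasDerivAt (fun x : ℝ => 1 - l₁*x) (-l₁) x := by
      simpa using ((hasDerivAt_id x).const_mul l₁).const_sub 1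
    have hv : HasDerivAt (fun x : ℝ => 1 - l₂*x) (-l₂) x := by
      simpa using ((hasDerivAt_id x).const_mul l₂).const_sub 1
    have hq := hu.div hv hv0.ne'
    have hq0 : (0:ℝ) < (1 - l₁*x)/(1 - l₂*x) := div_pos hu0 hv0
    have h2 := (hq.rpow_const (p := 1-α) (Or.inl hq0.ne')).const_mul (1/(l₁-l₂))
    refine h2.congr_deriv ?_
    simp only [Pi.div_apply]
    have hqval : ((1 - l₁*x)/(1 - l₂*x)) ^ (1-α-1)
        = (1 - l₁*x) ^ (-α) / (1 - l₂*x) ^ (-α) := by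
      rw [show (1:ℝ)-α-1 = -α by ring, Real.div_rpow hu0.le hv0.le]
    rw [hqval]
    have hnum : (-l₁ * (1 - l₂*x) - (1 - l₁*x) * -l₂) = l₂ - l₁ := by ring
    rw [hnum]
    have hvne : (1 - l₂*x) ^ (-α) ≠ 0 := (Real.rpow_pos_of_pos hv0 _).ne'
    have hsq : ((1 - l₂*x) ^ (2:ℕ) : ℝ) ≠ 0 := pow_ne_zero _ hv0.ne'
    have hexp : (1 - l₂*x) ^ (α-2) = (1 - l₂*x) ^ α / (1 - l₂*x) ^ (2:ℕ) := by
      rw [show α - 2 = α - ((2:ℕ):ℝ) by norm_num, Real.rpow_sub hv0, Real.rpow_natCast]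
    have hαneg : (1 - l₂*x) ^ (-α) = ((1 - l₂*x) ^ α)⁻¹ := Real.rpow_neg hv0.le α
    rw [hexp, hαneg]
    have hαne : ((1 - l₂*x) ^ α : ℝ) ≠ 0 := (Real.rpow_pos_of_pos hv0 _).ne'
    field_simp
    ring
  have hcont : IntervalIntegrable
      (fun x => (α-1) * ((1 - l₁*x) ^ (-α) * (1 - l₂*x) ^ (α-2))) volume 0 1 := by
    apply ContinuousOn.intervalIntegrable
    intro x hx
    rw [Set.uIcc_of_le (by norm_num : (0:ℝ) ≤ 1)] at hx
    obtain ⟨hx0, hx1⟩ := hx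
    have hu0 : (0:ℝ) < 1 - l₁*x := by nlinarith
    have hv0 : (0:ℝ) < 1 - l₂*x := by nlinarith
    apply ContinuousWithinAt.mono _ (Set.subset_univ _)
    apply ContinuousAt.continuousWithinAt
    refine continuousAt_const.mul (ContinuousAt.mul ?_ ?_)
    · exact ((continuous_const.sub (continuous_const.mul continuous_id)).continuousAt).rpow_const
        (Or.inl hu0.ne')
    · exact ((continuous_const.sub (continuous_const.mul continuous_id)).continuousAt).rpow_const
        (Or.inl hv0.ne')
  rw [intervalIntegral.integral_eq_sub_of_hasDerivAt hderiv hcont]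
  have h0 : Φ 0 = 1/(l₁-l₂) := by
    simp only [hΦ, mul_zero, sub_zero, div_one, Real.one_rpow, mul_one]
  have h1 : Φ 1 = (1/(l₁-l₂)) * ((1-l₁)/(1-l₂)) ^ (1-α) := by
    simp only [hΦ, mul_one]
  rw [h0, h1]
  ring

lemma gh_eq {l₂ : ℝ} (hα0 : 0 < α) (hα1 : α < 1) (hx0 : 0 < x) (hx1 : x < 1) :
    gK α l₁ x * hbK α l₂ x = (α-1) * ((1 - l₁*x) ^ (-α) * (1 - l₂*x) ^ (α-2)) := by
  have h1x : (0:ℝ) < 1 - x := by linarith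
  have hxne : (x:ℝ) ^ α ≠ 0 := (Real.rpow_pos_of_pos hx0 _).ne'
  have h1xne : ((1-x):ℝ) ^ α ≠ 0 := (Real.rpow_pos_of_pos h1x _).ne'
  unfold gK hbK
  rw [Real.rpow_neg hx0.le α, Real.rpow_neg h1x.le α]
  field_simp

end PFaux

/-- The double integral
`I(λ₁, λ₂) = ∫₀¹ (∫₀ˣ x^(−α)(1−x)^(−α)(1−λ₁x)^(−α) · y^(α−1)(1−y)^(α−1)(1−λ₂y)^(α−1) dy) dx`. -/
noncomputable def Idbl (α l₁ l₂ : ℝ) : ℝ :=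
  ∫ x in (0 : ℝ)..1, ∫ y in (0 : ℝ)..x,
    x ^ (-α) * (1 - x) ^ (-α) * (1 - l₁ * x) ^ (-α) *
      (y ^ (α - 1) * (1 - y) ^ (α - 1) * (1 - l₂ * y) ^ (α - 1))

/-- For `0 < α < 1` and distinct `λ₁, λ₂ ∈ (0,1)`, the
inhomogeneous Picard–Fuchs equation in `λ₂` holds:
`λ₂(1−λ₂) ∂²I/∂λ₂² + 2(α−λ₂) ∂I/∂λ₂ − α(1−α) I
  = (1/(λ₁−λ₂)) (((1−λ₁)/(1−λ₂))^(1−α) − 1)`. -/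
theorem stmt6 (α : ℝ) (hα0 : 0 < α) (hα1 : α < 1)
    (l₁ l₂ : ℝ) (hl₁ : l₁ ∈ Set.Ioo (0 : ℝ) 1) (hl₂ : l₂ ∈ Set.Ioo (0 : ℝ) 1)
    (hne : l₁ ≠ l₂) :
    l₂ * (1 - l₂) * deriv (deriv (fun t : ℝ => Idbl α l₁ t)) l₂
      + 2 * (α - l₂) * deriv (fun t : ℝ => Idbl α l₁ t) l₂
      - α * (1 - α) * Idbl α l₁ l₂
      = (1 / (l₁ - l₂)) * (((1 - l₁) / (1 - l₂)) ^ (1 - α) - 1) := by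
  obtain ⟨hl₂0, hl₂1⟩ := hl₂
  have hr0 : 0 < min l₂ (1-l₂)/4 := by
    have := lt_min hl₂0 (by linarith : (0:ℝ) < 1 - l₂)
    linarith
  have hId : (fun t : ℝ => Idbl α l₁ t) = fun s => ∫ x in (0:ℝ)..1, gK α l₁ x * J0K α s x := by
    funext s
    unfold Idbl J0K gK f0K
    exact intervalIntegral.integral_congr fun x _ => intervalIntegral.integral_const_mul _ _
  have hdist : dist l₂ l₂ < min l₂ (1-l₂)/4 := by
    rw [dist_self]; exact hr0
  have hd1 : ∀ t ∈ ball l₂ (min l₂ (1-l₂)/4),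
      HasDerivAt (fun u : ℝ => Idbl α l₁ u) (∫ x in (0:ℝ)..1, gK α l₁ x * J1K α t x) t := by
    intro t ht
    rw [hId]
    exact (hasDerivAt_G0 hα0 hα1 hl₁ hl₂0 hl₂1 (mem_ball.mp ht)).2
  have hderiv1 : deriv (fun t : ℝ => Idbl α l₁ t) l₂
      = ∫ x in (0:ℝ)..1, gK α l₁ x * J1K α l₂ x :=
    (hd1 l₂ (mem_ball_self hr0)).deriv
  have hev : deriv (fun t : ℝ => Idbl α l₁ t)
      =ᶠ[nhds l₂] fun s => ∫ x in (0:ℝ)..1, gK α l₁ x * J1K α s x := by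
    filter_upwards [Metric.ball_mem_nhds l₂ hr0] with t ht using (hd1 t ht).deriv
  have hderiv2 : deriv (deriv (fun t : ℝ => Idbl α l₁ t)) l₂
      = ∫ x in (0:ℝ)..1, gK α l₁ x * J2K α l₂ x := by
    rw [hev.deriv_eq]
    exact (hasDerivAt_G1 hα0 hα1 hl₁ hl₂0 hl₂1 hdist).2.deriv
  have hId2 : Idbl α l₁ l₂ = ∫ x in (0:ℝ)..1, gK α l₁ x * J0K α l₂ x := congrFun hId l₂
  have hIg0 : IntervalIntegrable (fun x => gK α l₁ x * J0K α l₂ x) volume 0 1 :=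
    int_gJ0 (l₂ := l₂) hα0 hα1 hl₁ hl₂0 (by linarith : l₂ ≤ (1+l₂)/2) (by linarith)
  have hIg1 : IntervalIntegrable (fun x => gK α l₁ x * J1K α l₂ x) volume 0 1 :=
    (hasDerivAt_G0 hα0 hα1 hl₁ hl₂0 hl₂1 hdist).1
  have hIg2 : IntervalIntegrable (fun x => gK α l₁ x * J2K α l₂ x) volume 0 1 :=
    (hasDerivAt_G1 hα0 hα1 hl₁ hl₂0 hl₂1 hdist).1
  rw [hderiv2, hderiv1, hId2]
  rw [← intervalIntegral.integral_const_mul (l₂ * (1-l₂)),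
    ← intervalIntegral.integral_const_mul (2 * (α-l₂)),
    ← intervalIntegral.integral_const_mul (α * (1-α)),
    ← intervalIntegral.integral_add (hIg2.const_mul _) (hIg1.const_mul _),
    ← intervalIntegral.integral_sub ((hIg2.const_mul _).add (hIg1.const_mul _))
      (hIg0.const_mul _)]
  rw [← final_integral hα0 hα1 hl₁ ⟨hl₂0, hl₂1⟩ hne]
  apply intervalIntegral.integral_congr_ae
  filter_upwards [ae_ne_one'] with x hx1 hx
  rw [Set.uIoc_of_le (by norm_num : (0:ℝ) ≤ 1)] at hx
  have hx1' : x < 1 := lt_of_le_of_ne hx.2 hx1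
  have hJ := Jcomb (t := l₂) (x := x) hα0 hα1 hl₂0 hl₂1 hx.1 hx1'
  have : l₂ * (1-l₂) * (gK α l₁ x * J2K α l₂ x) + 2 * (α-l₂) * (gK α l₁ x * J1K α l₂ x)
      - α * (1-α) * (gK α l₁ x * J0K α l₂ x)
      = gK α l₁ x * (l₂*(1-l₂) * J2K α l₂ x + 2*(α-l₂) * J1K α l₂ x
        - α*(1-α) * J0K α l₂ x) := by ring
  rw [this, hJ, gh_eq hα0 hα1 hx.1 hx1']
end

section
/- Let α be a real number with 0 < α < 1. For λ ∈ (0,1) define J(λ) = ∫_0^1 x^{−α}(1−x)^{−α}(1−λx)^{−α} dx. Then for all λ ∈ (0,1): λ(1−λ)·J''(λ) + 2(1−α−λ)·J'(λ) − α(1−α)·J(λ) = 0. -/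
open Real

/-- The Euler-type period integral `J(λ) = ∫₀¹ x^(−α)(1−x)^(−α)(1−λx)^(−α) dx`. -/
noncomputable def Jper (α l : ℝ) : ℝ :=
  ∫ x in (0 : ℝ)..1, x ^ (-α) * (1 - x) ^ (-α) * (1 - l * x) ^ (-α)

section PFaux

open MeasureTheory intervalIntegral Set Filter

variable {α l : ℝ}

private lemma rpow_le_aux {y r m : ℝ} (hm : 0 < m) (h1 : m ≤ y) (h2 : y ≤ 1) :
    y ^ r ≤ m ^ r + 1 := by
  rcases le_or_gt r 0 with h | h
  · have := Real.rpow_le_rpow_of_nonpos hm h1 h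
    linarith
  · have h3 : y ^ r ≤ 1 := Real.rpow_le_one (hm.le.trans h1) h2 h.le
    have h4 : 0 ≤ m ^ r := Real.rpow_nonneg hm.le r
    linarith

private lemma measAux (p q r l : ℝ) :
    AEStronglyMeasurable (fun x : ℝ => x ^ p * (1 - x) ^ q * (1 - l * x) ^ r)
      (volume.restrict (Set.uIoc (0:ℝ) 1)) := by
  apply Measurable.aestronglyMeasurable
  fun_prop

private lemma II_base {q : ℝ} (hq : -1 < q) :
    IntervalIntegrable (fun x : ℝ => (1 - x) ^ q) volume 0 1 := by
  have h := (intervalIntegrable_rpow' hq (a := 0) (b := 1)).comp_sub_left 1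
  norm_num at h
  exact h.symm

/-- Integrability of the basic integrand shape. -/
private lemma II_aux {p q : ℝ} (hp : -1 < p) (hq : -1 < q) {l : ℝ} (hl0 : 0 ≤ l) (hl1 : l < 1)
    (r : ℝ) :
    IntervalIntegrable (fun x : ℝ => x ^ p * (1 - x) ^ q * (1 - l * x) ^ r) volume 0 1 := by
  have hml : (0:ℝ) < 1 - l := by linarith
  have part1 : IntervalIntegrable (fun x : ℝ => x ^ p * (1 - x) ^ q * (1 - l * x) ^ r)
      volume 0 (1/2) := by
    refine IntervalIntegrable.mono_fun
      ((intervalIntegrable_rpow' hp (a := 0) (b := 1/2)).const_mul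
        ((((1:ℝ)/2) ^ q + 1) * ((1 - l) ^ r + 1))) ?_ ?_
    · apply Measurable.aestronglyMeasurable; fun_prop
    · rw [Filter.EventuallyLE, ae_restrict_iff' measurableSet_uIoc]
      refine Filter.Eventually.of_forall fun x hx => ?_
      rw [Set.uIoc_of_le (by norm_num : (0:ℝ) ≤ 1/2)] at hx
      obtain ⟨hx0, hx2⟩ := hx
      have hx1 : x ≤ 1 := by linarith
      have hb1 : (1 - x) ^ q ≤ ((1:ℝ)/2) ^ q + 1 :=
        rpow_le_aux (by norm_num) (by linarith) (by linarith)
      have hb2 : (1 - l * x) ^ r ≤ (1 - l) ^ r + 1 := by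
        refine rpow_le_aux hml (by nlinarith) (by nlinarith)
      have hn1 : (0:ℝ) ≤ x ^ p := Real.rpow_nonneg hx0.le p
      have hn2 : (0:ℝ) ≤ (1 - x) ^ q := Real.rpow_nonneg (by linarith) q
      have hn3 : (0:ℝ) ≤ (1 - l * x) ^ r := Real.rpow_nonneg (by nlinarith) r
      rw [Real.norm_eq_abs, Real.norm_eq_abs, abs_of_nonneg (by positivity),
        abs_of_nonneg (by positivity)]
      calc x ^ p * (1 - x) ^ q * (1 - l * x) ^ r
          ≤ x ^ p * (((1:ℝ)/2) ^ q + 1) * ((1 - l) ^ r + 1) := by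
            apply mul_le_mul (mul_le_mul le_rfl hb1 hn2 hn1) hb2 hn3
            positivity
        _ = (((1:ℝ)/2) ^ q + 1) * ((1 - l) ^ r + 1) * x ^ p := by ring
  have part2 : IntervalIntegrable (fun x : ℝ => x ^ p * (1 - x) ^ q * (1 - l * x) ^ r)
      volume (1/2) 1 := by
    have hbase : IntervalIntegrable (fun x : ℝ => (1 - x) ^ q) volume (1/2) 1 := by
      have := (intervalIntegrable_rpow' hq (a := 0) (b := 1/2)).comp_sub_left 1
      norm_num at this
      exact this.symm
    refine IntervalIntegrable.mono_fun
      (hbase.const_mul ((((1:ℝ)/2) ^ p + 1) * ((1 - l) ^ r + 1))) ?_ ?_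
    · apply Measurable.aestronglyMeasurable; fun_prop
    · rw [Filter.EventuallyLE, ae_restrict_iff' measurableSet_uIoc]
      refine Filter.Eventually.of_forall fun x hx => ?_
      rw [Set.uIoc_of_le (by norm_num : (1:ℝ)/2 ≤ 1)] at hx
      obtain ⟨hx2, hx1⟩ := hx
      have hx0 : (0:ℝ) < x := by linarith
      have hb1 : x ^ p ≤ ((1:ℝ)/2) ^ p + 1 :=
        rpow_le_aux (by norm_num) (by linarith) hx1
      have hb2 : (1 - l * x) ^ r ≤ (1 - l) ^ r + 1 := by
        refine rpow_le_aux hml (by nlinarith) (by nlinarith)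
      have hn1 : (0:ℝ) ≤ x ^ p := Real.rpow_nonneg hx0.le p
      have hn2 : (0:ℝ) ≤ (1 - x) ^ q := Real.rpow_nonneg (by linarith) q
      have hn3 : (0:ℝ) ≤ (1 - l * x) ^ r := Real.rpow_nonneg (by nlinarith) r
      rw [Real.norm_eq_abs, Real.norm_eq_abs, abs_of_nonneg (by positivity),
        abs_of_nonneg (by positivity)]
      calc x ^ p * (1 - x) ^ q * (1 - l * x) ^ r
          ≤ (((1:ℝ)/2) ^ p + 1) * (1 - x) ^ q * ((1 - l) ^ r + 1) := by
            apply mul_le_mul (mul_le_mul hb1 le_rfl hn2 (by positivity)) hb2 hn3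
            positivity
        _ = (((1:ℝ)/2) ^ p + 1) * ((1 - l) ^ r + 1) * (1 - x) ^ q := by ring
  exact part1.trans part2

/-- Positivity of `1 - l' * x` for `l'` near `l` and `x ∈ (0,1]`. -/
private lemma base_ge {l l' x : ℝ} (hl0 : 0 < l) (hl1 : l < 1)
    (hl' : l' ∈ Metric.ball l ((1-l)/2))
    (hx0 : 0 < x) (hx1 : x ≤ 1) : (1 - l)/2 ≤ 1 - l' * x := by
  rw [Metric.mem_ball, Real.dist_eq, abs_sub_lt_iff] at hl'
  have h1 : l' < l + (1 - l)/2 := by linarith [hl'.1]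
  have h2 : (0:ℝ) ≤ (l + (1-l)/2 - l') * x := by
    apply mul_nonneg (by linarith) hx0.le
  have h3 : (0:ℝ) ≤ (l + (1-l)/2) * (1 - x) := by
    apply mul_nonneg (by linarith) (by linarith)
  nlinarith

/-- First derivative under the integral sign. -/
private lemma hasDerivAt_J (hα0 : 0 < α) (hα1 : α < 1) (hl0 : 0 < l) (hl1 : l < 1) :
    HasDerivAt (Jper α)
      (∫ x in (0:ℝ)..1, α * (x ^ (1-α) * (1 - x) ^ (-α) * (1 - l * x) ^ (-(α+1)))) l := by
  set δ : ℝ := (1 - l)/2 with hδdef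
  have hδ : 0 < δ := by simp only [hδdef]; linarith
  have key := intervalIntegral.hasDerivAt_integral_of_dominated_loc_of_deriv_le
    (𝕜 := ℝ) (μ := volume) (a := 0) (b := 1)
    (F := fun l' x => x ^ (-α) * (1 - x) ^ (-α) * (1 - l' * x) ^ (-α))
    (F' := fun l' x => α * (x ^ (1-α) * (1 - x) ^ (-α) * (1 - l' * x) ^ (-(α+1))))
    (x₀ := l) (s := Metric.ball l δ)
    (bound := fun x => α * δ ^ (-(α+1)) * (1 - x) ^ (-α)) (Metric.ball_mem_nhds l hδ)
    (Filter.Eventually.of_forall fun l' => measAux _ _ _ _) ?_ ?_ ?_ ?_ ?_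
  · exact key.2
  · exact II_aux (by linarith) (by linarith) hl0.le hl1 _
  · exact ((measAux _ _ _ _).const_mul α)
  · refine Filter.Eventually.of_forall fun x hx => ?_
    rw [Set.uIoc_of_le (by norm_num : (0:ℝ) ≤ 1)] at hx
    obtain ⟨hx0, hx1⟩ := hx
    intro l' hl'
    have hb := base_ge hl0 hl1 hl' hx0 hx1
    have hbp : (0:ℝ) < 1 - l' * x := lt_of_lt_of_le hδ hb
    have h1 : x ^ (1-α) ≤ 1 := Real.rpow_le_one hx0.le hx1 (by linarith)
    have h2 : (1 - l' * x) ^ (-(α+1)) ≤ δ ^ (-(α+1)) :=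
      Real.rpow_le_rpow_of_nonpos hδ hb (by linarith)
    have hn2 : (0:ℝ) ≤ (1 - x) ^ (-α) := Real.rpow_nonneg (by linarith) _
    have hn3 : (0:ℝ) ≤ (1 - l' * x) ^ (-(α+1)) := Real.rpow_nonneg hbp.le _
    rw [Real.norm_eq_abs, abs_of_nonneg (by positivity)]
    calc α * (x ^ (1-α) * (1 - x) ^ (-α) * (1 - l' * x) ^ (-(α+1)))
        ≤ α * (1 * (1 - x) ^ (-α) * (δ ^ (-(α+1)))) := by
          apply mul_le_mul_of_nonneg_left _ hα0.le
          exact mul_le_mul (mul_le_mul h1 le_rfl hn2 zero_le_one) h2 hn3 (by positivity)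
      _ = α * δ ^ (-(α+1)) * (1 - x) ^ (-α) := by ring
  · exact (II_base (by linarith)).const_mul (α * δ ^ (-(α+1)))
  · refine Filter.Eventually.of_forall fun x hx => ?_
    rw [Set.uIoc_of_le (by norm_num : (0:ℝ) ≤ 1)] at hx
    obtain ⟨hx0, hx1⟩ := hx
    intro l' hl'
    have hb := base_ge hl0 hl1 hl' hx0 hx1
    have hbp : (0:ℝ) < 1 - l' * x := lt_of_lt_of_le hδ hb
    have hlin : HasDerivAt (fun y : ℝ => 1 - y * x) (-x) l' := by
      simpa using ((hasDerivAt_id l').mul_const x).const_sub 1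
    have hpow : HasDerivAt (fun y : ℝ => y ^ (-α)) (-α * (1 - l' * x) ^ (-α - 1)) (1 - l' * x) :=
      Real.hasDerivAt_rpow_const (Or.inl hbp.ne')
    have h := (hpow.comp l' hlin).const_mul (x ^ (-α) * (1 - x) ^ (-α))
    have heq : α * (x ^ (1-α) * (1 - x) ^ (-α) * (1 - l' * x) ^ (-(α+1)))
        = x ^ (-α) * (1 - x) ^ (-α) * (-α * (1 - l' * x) ^ (-α - 1) * -x) := by
      rw [show (1-α:ℝ) = (-α) + 1 by ring, Real.rpow_add hx0, Real.rpow_one,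
        show (-(α+1):ℝ) = -α - 1 by ring]
      ring
    show HasDerivAt (fun l'' : ℝ => x ^ (-α) * (1 - x) ^ (-α) * (1 - l'' * x) ^ (-α))
      (α * (x ^ (1-α) * (1 - x) ^ (-α) * (1 - l' * x) ^ (-(α+1)))) l'
    rw [heq]
    exact h

/-- Second derivative under the integral sign. -/
private lemma hasDerivAt_J1_s7 (hα0 : 0 < α) (hα1 : α < 1) (hl0 : 0 < l) (hl1 : l < 1) :
    HasDerivAt
      (fun l' => ∫ x in (0:ℝ)..1, α * (x ^ (1-α) * (1 - x) ^ (-α) * (1 - l' * x) ^ (-(α+1))))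
      (∫ x in (0:ℝ)..1, (α*(α+1)) * (x ^ (2-α) * (1 - x) ^ (-α) * (1 - l * x) ^ (-(α+2)))) l := by
  set δ : ℝ := (1 - l)/2 with hδdef
  have hδ : 0 < δ := by simp only [hδdef]; linarith
  have key := intervalIntegral.hasDerivAt_integral_of_dominated_loc_of_deriv_le
    (𝕜 := ℝ) (μ := volume) (a := 0) (b := 1)
    (F := fun l' x => α * (x ^ (1-α) * (1 - x) ^ (-α) * (1 - l' * x) ^ (-(α+1))))
    (F' := fun l' x => (α*(α+1)) * (x ^ (2-α) * (1 - x) ^ (-α) * (1 - l' * x) ^ (-(α+2))))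
    (x₀ := l) (s := Metric.ball l δ)
    (bound := fun x => (α*(α+1)) * δ ^ (-(α+2)) * (1 - x) ^ (-α)) (Metric.ball_mem_nhds l hδ)
    (Filter.Eventually.of_forall fun l' => ((measAux _ _ _ _).const_mul α)) ?_ ?_ ?_ ?_ ?_
  · exact key.2
  · exact (II_aux (by linarith) (by linarith) hl0.le hl1 _).const_mul α
  · exact ((measAux _ _ _ _).const_mul (α*(α+1)))
  · refine Filter.Eventually.of_forall fun x hx => ?_
    rw [Set.uIoc_of_le (by norm_num : (0:ℝ) ≤ 1)] at hx
    obtain ⟨hx0, hx1⟩ := hx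
    intro l' hl'
    have hb := base_ge hl0 hl1 hl' hx0 hx1
    have hbp : (0:ℝ) < 1 - l' * x := lt_of_lt_of_le hδ hb
    have h1 : x ^ (2-α) ≤ 1 := Real.rpow_le_one hx0.le hx1 (by linarith)
    have h2 : (1 - l' * x) ^ (-(α+2)) ≤ δ ^ (-(α+2)) :=
      Real.rpow_le_rpow_of_nonpos hδ hb (by linarith)
    have hn2 : (0:ℝ) ≤ (1 - x) ^ (-α) := Real.rpow_nonneg (by linarith) _
    have hn3 : (0:ℝ) ≤ (1 - l' * x) ^ (-(α+2)) := Real.rpow_nonneg hbp.le _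
    rw [Real.norm_eq_abs, abs_of_nonneg (by positivity)]
    calc (α*(α+1)) * (x ^ (2-α) * (1 - x) ^ (-α) * (1 - l' * x) ^ (-(α+2)))
        ≤ (α*(α+1)) * (1 * (1 - x) ^ (-α) * (δ ^ (-(α+2)))) := by
          apply mul_le_mul_of_nonneg_left _ (by positivity)
          exact mul_le_mul (mul_le_mul h1 le_rfl hn2 zero_le_one) h2 hn3 (by positivity)
      _ = (α*(α+1)) * δ ^ (-(α+2)) * (1 - x) ^ (-α) := by ring
  · exact (II_base (by linarith)).const_mul ((α*(α+1)) * δ ^ (-(α+2)))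
  · refine Filter.Eventually.of_forall fun x hx => ?_
    rw [Set.uIoc_of_le (by norm_num : (0:ℝ) ≤ 1)] at hx
    obtain ⟨hx0, hx1⟩ := hx
    intro l' hl'
    have hb := base_ge hl0 hl1 hl' hx0 hx1
    have hbp : (0:ℝ) < 1 - l' * x := lt_of_lt_of_le hδ hb
    have hlin : HasDerivAt (fun y : ℝ => 1 - y * x) (-x) l' := by
      simpa using ((hasDerivAt_id l').mul_const x).const_sub 1
    have hpow : HasDerivAt (fun y : ℝ => y ^ (-(α+1)))
        (-(α+1) * (1 - l' * x) ^ (-(α+1) - 1)) (1 - l' * x) :=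
      Real.hasDerivAt_rpow_const (Or.inl hbp.ne')
    have h := ((hpow.comp l' hlin).const_mul (x ^ (1-α) * (1 - x) ^ (-α))).const_mul α
    have heq : (α*(α+1)) * (x ^ (2-α) * (1 - x) ^ (-α) * (1 - l' * x) ^ (-(α+2)))
        = α * (x ^ (1-α) * (1 - x) ^ (-α) * (-(α+1) * (1 - l' * x) ^ (-(α+1) - 1) * -x)) := by
      rw [show (2-α:ℝ) = (1-α) + 1 by ring, Real.rpow_add hx0, Real.rpow_one,
        show (-(α+2):ℝ) = -(α+1) - 1 by ring]
      ring
    show HasDerivAt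
      (fun l'' : ℝ => α * (x ^ (1-α) * (1 - x) ^ (-α) * (1 - l'' * x) ^ (-(α+1))))
      ((α*(α+1)) * (x ^ (2-α) * (1 - x) ^ (-α) * (1 - l' * x) ^ (-(α+2)))) l'
    rw [heq]
    exact h

/-- Pointwise Picard–Fuchs identity: the PF combination of integrands is the `x`-derivative
of `g x = -α x^(1-α)(1-x)^(1-α)(1-lx)^(-(α+1))`. -/
private lemma key_deriv (hα0 : 0 < α) (hα1 : α < 1) (hl0 : 0 < l) (hl1 : l < 1)
    {x : ℝ} (hx : x ∈ Ioo (0:ℝ) 1) :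
    HasDerivAt (fun x : ℝ => -α * (x ^ (1-α) * (1 - x) ^ (1-α) * (1 - l * x) ^ (-(α+1))))
      (l * (1 - l) * ((α*(α+1)) * (x ^ (2-α) * (1 - x) ^ (-α) * (1 - l * x) ^ (-(α+2))))
        + 2 * (1 - α - l) * (α * (x ^ (1-α) * (1 - x) ^ (-α) * (1 - l * x) ^ (-(α+1))))
        - α * (1 - α) * (x ^ (-α) * (1 - x) ^ (-α) * (1 - l * x) ^ (-α))) x := by
  obtain ⟨hx0, hx1⟩ := hx
  have hx1' : (0:ℝ) < 1 - x := by linarith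
  have hlx : (0:ℝ) < 1 - l * x := by nlinarith
  have hu : HasDerivAt (fun x : ℝ => x ^ (1-α)) ((1-α) * x ^ (1-α-1)) x :=
    Real.hasDerivAt_rpow_const (Or.inl hx0.ne')
  have hvlin : HasDerivAt (fun x : ℝ => 1 - x) (-1) x := by
    simpa using (hasDerivAt_id x).const_sub 1
  have hv : HasDerivAt (fun x : ℝ => (1 - x) ^ (1-α)) ((1-α) * (1 - x) ^ (1-α-1) * (-1)) x :=
    (Real.hasDerivAt_rpow_const (Or.inl hx1'.ne')).comp x hvlin
  have hwlin : HasDerivAt (fun x : ℝ => 1 - l * x) (-l) x := by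
    simpa using ((hasDerivAt_id x).const_mul l).const_sub 1
  have hw : HasDerivAt (fun x : ℝ => (1 - l * x) ^ (-(α+1)))
      (-(α+1) * (1 - l * x) ^ (-(α+1) - 1) * (-l)) x :=
    by have := (Real.hasDerivAt_rpow_const (p := -(α+1)) (Or.inl hlx.ne')).comp x hwlin; exact this
  have h := ((hu.mul hv).mul hw).const_mul (-α)
  convert h using 1
  case e'_4 => rfl
  case e'_5 => rfl
  case e'_8 => rfl
  simp only [Pi.mul_apply]
  rw [show (1-α-1:ℝ) = -α by ring, show (-(α+1) - 1:ℝ) = -(α+2) by ring,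
    show (2-α:ℝ) = (1-α)+1 by ring, Real.rpow_add hx0, Real.rpow_one,
    show (1-α:ℝ) = (-α)+1 by ring, Real.rpow_add hx0, Real.rpow_one,
    Real.rpow_add hx1', Real.rpow_one,
    show (-α:ℝ) = (-(α+1)) + 1 by ring, Real.rpow_add hlx, Real.rpow_one,
    show (-(α+1):ℝ) = (-(α+2)) + 1 by ring, Real.rpow_add hlx, Real.rpow_one]
  ring

/-- The integral of the PF combination vanishes. -/
private lemma integral_comb (hα0 : 0 < α) (hα1 : α < 1) (hl0 : 0 < l) (hl1 : l < 1) :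
    (∫ x in (0:ℝ)..1,
      (l * (1 - l) * ((α*(α+1)) * (x ^ (2-α) * (1 - x) ^ (-α) * (1 - l * x) ^ (-(α+2))))
        + 2 * (1 - α - l) * (α * (x ^ (1-α) * (1 - x) ^ (-α) * (1 - l * x) ^ (-(α+1))))
        - α * (1 - α) * (x ^ (-α) * (1 - x) ^ (-α) * (1 - l * x) ^ (-α)))) = 0 := by
  have h1α : (0:ℝ) < 1 - α := by linarith
  set g : ℝ → ℝ := fun x => -α * (x ^ (1-α) * (1 - x) ^ (1-α) * (1 - l * x) ^ (-(α+1))) with hg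
  have hcont : ContinuousOn g (Icc 0 1) := by
    have c1 : Continuous fun x : ℝ => x ^ (1-α) := by
      rw [continuous_iff_continuousAt]
      exact fun x => Real.continuousAt_rpow_const x _ (Or.inr h1α.le)
    have c2 : Continuous fun x : ℝ => (1 - x) ^ (1-α) :=
      c1.comp (continuous_const.sub continuous_id)
    have c3 : ContinuousOn (fun x : ℝ => (1 - l * x) ^ (-(α+1))) (Icc 0 1) := by
      apply ContinuousOn.rpow_const
        ((continuous_const.sub (continuous_const.mul continuous_id)).continuousOn)
      intro x hx
      left
      have : (0:ℝ) < 1 - l * x := by nlinarith [hx.1, hx.2]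
      exact this.ne'
    exact continuousOn_const.mul ((c1.continuousOn.mul c2.continuousOn).mul c3)
  have hint : IntervalIntegrable (fun x : ℝ =>
      l * (1 - l) * ((α*(α+1)) * (x ^ (2-α) * (1 - x) ^ (-α) * (1 - l * x) ^ (-(α+2))))
        + 2 * (1 - α - l) * (α * (x ^ (1-α) * (1 - x) ^ (-α) * (1 - l * x) ^ (-(α+1))))
        - α * (1 - α) * (x ^ (-α) * (1 - x) ^ (-α) * (1 - l * x) ^ (-α))) volume 0 1 := by
    refine IntervalIntegrable.sub (IntervalIntegrable.add ?_ ?_) ?_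
    · exact ((II_aux (by linarith) (by linarith) hl0.le hl1 _).const_mul _).const_mul _
    · exact ((II_aux (by linarith) (by linarith) hl0.le hl1 _).const_mul _).const_mul _
    · exact (II_aux (by linarith) (by linarith) hl0.le hl1 _).const_mul _
  have hftc := intervalIntegral.integral_eq_sub_of_hasDeriv_right_of_le (by norm_num : (0:ℝ) ≤ 1)
    hcont (fun x hx => ((key_deriv hα0 hα1 hl0 hl1 hx)).hasDerivWithinAt) hint
  rw [hftc]
  simp only [hg]
  rw [Real.zero_rpow h1α.ne', show (1:ℝ) - 1 = 0 by ring, Real.zero_rpow h1α.ne']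
  ring

end PFaux

/-- For `0 < α < 1` and `λ ∈ (0,1)`, the period integral `J`
is annihilated by the homogeneous Picard–Fuchs operator:
`λ(1−λ) J'' + 2(1−α−λ) J' − α(1−α) J = 0`. -/
theorem stmt7 (α : ℝ) (hα0 : 0 < α) (hα1 : α < 1)
    (l : ℝ) (hl : l ∈ Set.Ioo (0 : ℝ) 1) :
    l * (1 - l) * deriv (deriv (Jper α)) l
      + 2 * (1 - α - l) * deriv (Jper α) l
      - α * (1 - α) * Jper α l = 0 := by
  obtain ⟨hl0, hl1⟩ := hl
  set J1 : ℝ → ℝ := fun l' =>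
    ∫ x in (0:ℝ)..1, α * (x ^ (1-α) * (1 - x) ^ (-α) * (1 - l' * x) ^ (-(α+1))) with hJ1def
  have hJ' : ∀ l' ∈ Set.Ioo (0:ℝ) 1, HasDerivAt (Jper α) (J1 l') l' := fun l' hl' =>
    hasDerivAt_J hα0 hα1 hl'.1 hl'.2
  have hd1 : deriv (Jper α) l = J1 l := (hJ' l ⟨hl0, hl1⟩).deriv
  have hEq : deriv (Jper α) =ᶠ[nhds l] J1 := by
    filter_upwards [Ioo_mem_nhds hl0 hl1] with y hy using (hJ' y hy).deriv
  have hd2 : deriv (deriv (Jper α)) l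
      = ∫ x in (0:ℝ)..1, (α*(α+1)) * (x ^ (2-α) * (1 - x) ^ (-α) * (1 - l * x) ^ (-(α+2))) := by
    rw [hEq.deriv_eq]
    exact (hasDerivAt_J1_s7 hα0 hα1 hl0 hl1).deriv
  rw [hd1, hd2, hJ1def, Jper]
  have hI2 : IntervalIntegrable (fun x : ℝ =>
      (α*(α+1)) * (x ^ (2-α) * (1 - x) ^ (-α) * (1 - l * x) ^ (-(α+2))))
      MeasureTheory.volume 0 1 :=
    (II_aux (by linarith) (by linarith) hl0.le hl1 _).const_mul _
  have hI1 : IntervalIntegrable (fun x : ℝ =>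
      α * (x ^ (1-α) * (1 - x) ^ (-α) * (1 - l * x) ^ (-(α+1)))) MeasureTheory.volume 0 1 :=
    (II_aux (by linarith) (by linarith) hl0.le hl1 _).const_mul _
  have hI0 : IntervalIntegrable (fun x : ℝ =>
      x ^ (-α) * (1 - x) ^ (-α) * (1 - l * x) ^ (-α)) MeasureTheory.volume 0 1 :=
    II_aux (by linarith) (by linarith) hl0.le hl1 _
  calc l * (1 - l) *
        (∫ x in (0:ℝ)..1, (α*(α+1)) * (x ^ (2-α) * (1 - x) ^ (-α) * (1 - l * x) ^ (-(α+2))))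
      + 2 * (1 - α - l) *
        (∫ x in (0:ℝ)..1, α * (x ^ (1-α) * (1 - x) ^ (-α) * (1 - l * x) ^ (-(α+1))))
      - α * (1 - α) *
        (∫ x in (0:ℝ)..1, x ^ (-α) * (1 - x) ^ (-α) * (1 - l * x) ^ (-α))
      = ∫ x in (0:ℝ)..1,
        (l * (1 - l) * ((α*(α+1)) * (x ^ (2-α) * (1 - x) ^ (-α) * (1 - l * x) ^ (-(α+2))))
          + 2 * (1 - α - l) * (α * (x ^ (1-α) * (1 - x) ^ (-α) * (1 - l * x) ^ (-(α+1))))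
          - α * (1 - α) * (x ^ (-α) * (1 - x) ^ (-α) * (1 - l * x) ^ (-α))) := by
        rw [← intervalIntegral.integral_const_mul, ← intervalIntegral.integral_const_mul,
          ← intervalIntegral.integral_const_mul,
          ← intervalIntegral.integral_add (hI2.const_mul _) (hI1.const_mul _),
          ← intervalIntegral.integral_sub ((hI2.const_mul _).add (hI1.const_mul _))
            (hI0.const_mul _)]
    _ = 0 := integral_comb hα0 hα1 hl0 hl1
end

section
/- Let α be a real number with 0 < α < 1 and fix λ₂ ∈ (0,1). Define, for λ₁ ∈ (0,1), I(λ₁, λ₂) = ∫_0^1 ( ∫_0^x x^{−α}(1−x)^{−α}(1−λ₁x)^{−α} · y^{α−1}(1−y)^{α−1}(1−λ₂y)^{α−1} dy ) dx. Then the function λ₁ ↦ I(λ₁, λ₂) is real-analytic on the interval (0,1). -/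
open Real

open MeasureTheory Set Metric Filter

/-- Beta-type integrand is integrable near the left endpoint. -/
lemma rbeta_left {p : ℝ} (q : ℝ) (hp : -1 < p) :
    IntervalIntegrable (fun x : ℝ => x ^ p * (1 - x) ^ q) volume 0 (1/2) := by
  apply IntervalIntegrable.mul_continuousOn
  · exact intervalIntegral.intervalIntegrable_rpow' hp
  · refine ContinuousOn.rpow_const (continuousOn_const.sub continuousOn_id) fun x hx => ?_
    rw [Set.uIcc_of_le (by norm_num : (0:ℝ) ≤ 1/2)] at hx
    exact Or.inl (ne_of_gt (by linarith [hx.2] : (0:ℝ) < 1 - x))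

/-- Beta-type integrand is integrable on `[0,1]`. -/
lemma rbeta {p q : ℝ} (hp : -1 < p) (hq : -1 < q) :
    IntervalIntegrable (fun x : ℝ => x ^ p * (1 - x) ^ q) volume 0 1 := by
  refine (rbeta_left q hp).trans ?_
  rw [IntervalIntegrable.iff_comp_neg]
  convert ((rbeta_left p hq).comp_add_right 1).symm using 1
  · ext1 x
    rw [mul_comm]
    congr 2 <;> ring
  · norm_num
  · norm_num

lemma Idbl_eq (α l₁ l₂ : ℝ) : Idbl α l₁ l₂ = ∫ x in (0:ℝ)..1, (1 - l₁ * x) ^ (-α) *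
    (x ^ (-α) * (1 - x) ^ (-α) *
      ∫ y in (0:ℝ)..x, y ^ (α - 1) * (1 - y) ^ (α - 1) * (1 - l₂ * y) ^ (α - 1)) := by
  unfold Idbl
  refine intervalIntegral.integral_congr fun x _ => ?_
  rw [intervalIntegral.integral_const_mul]
  ring

/-- For `0 < α < 1` and fixed `λ₂ ∈ (0,1)`, the function
`λ₁ ↦ I(λ₁, λ₂)` is real-analytic on the open interval `(0,1)`. -/
theorem stmt8 (α : ℝ) (hα0 : 0 < α) (hα1 : α < 1)
    (l₂ : ℝ) (hl₂ : l₂ ∈ Set.Ioo (0 : ℝ) 1) :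
    AnalyticOn ℝ (fun l₁ : ℝ => Idbl α l₁ l₂) (Set.Ioo (0 : ℝ) 1) := by
  -- the inner data, independent of `l₁`
  set g : ℝ → ℝ := fun y => y ^ (α - 1) * (1 - y) ^ (α - 1) * (1 - l₂ * y) ^ (α - 1) with hg
  set c : ℝ → ℝ := fun x => x ^ (-α) * (1 - x) ^ (-α) * ∫ y in (0:ℝ)..x, g y with hc
  have hg_int : IntervalIntegrable g volume 0 1 := by
    refine (rbeta (by linarith) (by linarith)).mul_continuousOn ?_
    refine ContinuousOn.rpow_const
      (continuousOn_const.sub (continuous_const.mul continuous_id).continuousOn)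
      fun y hy => Or.inl ?_
    rw [Set.uIcc_of_le zero_le_one] at hy
    have : l₂ * y < 1 := by nlinarith [hl₂.1, hl₂.2, hy.1, hy.2]
    exact ne_of_gt (by linarith : (0:ℝ) < 1 - l₂ * y)
  have hG_cont : ContinuousOn (fun x => ∫ y in (0:ℝ)..x, g y) (Icc (0:ℝ) 1) := by
    have := intervalIntegral.continuousOn_primitive_interval' hg_int
      (left_mem_uIcc (a := (0:ℝ)) (b := 1))
    rwa [Set.uIcc_of_le zero_le_one] at this
  -- bound for the primitive
  set C : ℝ := ∫ y in (0:ℝ)..1, |g y| with hCdef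
  have hC0 : 0 ≤ C :=
    intervalIntegral.integral_nonneg zero_le_one fun y _ => abs_nonneg _
  have hG_bdd : ∀ x ∈ Icc (0:ℝ) 1, |∫ y in (0:ℝ)..x, g y| ≤ C := by
    intro x hx
    refine (intervalIntegral.abs_integral_le_integral_abs hx.1).trans ?_
    exact intervalIntegral.integral_mono_interval le_rfl hx.1 hx.2
      (ae_of_all _ fun y => abs_nonneg _) hg_int.abs
  have hβ : IntervalIntegrable (fun x : ℝ => x ^ (-α) * (1 - x) ^ (-α)) volume 0 1 :=
    rbeta (by linarith) (by linarith)
  have hc_bdd : ∀ x ∈ Icc (0:ℝ) 1, |c x| ≤ C * (x ^ (-α) * (1 - x) ^ (-α)) := by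
    intro x hx
    have h1 : (0:ℝ) ≤ x ^ (-α) := Real.rpow_nonneg hx.1 _
    have h2 : (0:ℝ) ≤ (1 - x) ^ (-α) := Real.rpow_nonneg (by linarith [hx.2]) _
    have : |c x| = x ^ (-α) * (1 - x) ^ (-α) * |∫ y in (0:ℝ)..x, g y| := by
      simp only [hc]
      rw [abs_mul, abs_mul, abs_of_nonneg h1, abs_of_nonneg h2]
    rw [this]
    calc x ^ (-α) * (1 - x) ^ (-α) * |∫ y in (0:ℝ)..x, g y|
        ≤ x ^ (-α) * (1 - x) ^ (-α) * C := by
          exact mul_le_mul_of_nonneg_left (hG_bdd x hx) (by positivity)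
      _ = C * (x ^ (-α) * (1 - x) ^ (-α)) := by ring
  have hc_cont : ContinuousOn c (Ioo (0:ℝ) 1) := by
    refine ContinuousOn.mul (ContinuousOn.mul ?_ ?_) (hG_cont.mono Ioo_subset_Icc_self)
    · exact continuousOn_id.rpow_const fun x hx => Or.inl (ne_of_gt hx.1)
    · exact (continuousOn_const.sub continuousOn_id).rpow_const
        fun x hx => Or.inl (ne_of_gt (by linarith [hx.2] : (0:ℝ) < 1 - x))
  have hc_meas : AEStronglyMeasurable c (volume.restrict (Ioc (0:ℝ) 1)) := by
    rw [← Measure.restrict_congr_set Ioo_ae_eq_Ioc]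
    exact hc_cont.aestronglyMeasurable measurableSet_Ioo
  have hc_int : IntervalIntegrable c volume 0 1 := by
    rw [intervalIntegrable_iff_integrableOn_Ioc_of_le zero_le_one]
    have hint : IntegrableOn (fun x => C * (x ^ (-α) * (1 - x) ^ (-α))) (Ioc (0:ℝ) 1) volume := by
      have := hβ.const_mul C
      rwa [intervalIntegrable_iff_integrableOn_Ioc_of_le zero_le_one] at this
    refine hint.mono' hc_meas ?_
    rw [ae_restrict_iff' measurableSet_Ioc]
    exact ae_of_all _ fun x hx => by
      simpa [Real.norm_eq_abs] using hc_bdd x (Ioc_subset_Icc_self hx)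
  -- now analyticity at each point
  intro a ha
  set δ : ℝ := (1 - a) / 2 with hδdef
  have hδ : 0 < δ := by simp only [hδdef]; linarith [ha.2]
  set ε : ℝ := min (a / 2) ((1 - a) / 2) with hεdef
  have hε : 0 < ε := by
    simp only [hεdef, lt_min_iff]; constructor <;> linarith [ha.1, ha.2]
  have hεδ : ε ≤ δ := min_le_right _ _
  -- complex extension
  set F : ℂ → ℝ → ℂ := fun z x => (1 - z * (x:ℂ)) ^ ((-α : ℝ) : ℂ) * ((c x : ℝ) : ℂ) with hF
  set F' : ℂ → ℝ → ℂ := fun z x =>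
    ((-α : ℝ) : ℂ) * (1 - z * (x:ℂ)) ^ (((-α : ℝ) : ℂ) - 1) * (-(x:ℂ)) * ((c x : ℝ) : ℂ) with hF'
  -- geometric facts
  have hre : ∀ z ∈ ball ((a:ℂ)) ε, ∀ x ∈ Icc (0:ℝ) 1, δ ≤ (1 - z * (x:ℂ)).re := by
    intro z hz x hx
    have hd : ‖z - (a:ℂ)‖ < ε := by
      rw [mem_ball, Complex.dist_eq] at hz; exact hz
    have h1 : |z.re - a| ≤ ‖z - (a:ℂ)‖ := by
      simpa using Complex.abs_re_le_norm (z - (a:ℂ))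
    have hzre : z.re < a + ε := by
      have := (abs_lt.mp (lt_of_le_of_lt h1 hd)).2; linarith
    have hre' : (1 - z * (x:ℂ)).re = 1 - z.re * x := by
      simp [Complex.sub_re, Complex.mul_re]
    rw [hre']
    have haε : a + ε ≤ 1 - δ := by
      have : ε ≤ (1 - a) / 2 := min_le_right _ _
      simp only [hδdef]; linarith
    rcases le_or_gt z.re 0 with h | h
    · have : z.re * x ≤ 0 := mul_nonpos_of_nonpos_of_nonneg h hx.1
      have : δ ≤ 1 := by simp only [hδdef]; linarith [ha.1]
      linarith [mul_nonpos_of_nonpos_of_nonneg h hx.1]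
    · have : z.re * x ≤ z.re := by nlinarith [hx.2]
      linarith
  have habs : ∀ z ∈ ball ((a:ℂ)) ε, ∀ x ∈ Icc (0:ℝ) 1, δ ≤ ‖1 - z * (x:ℂ)‖ :=
    fun z hz x hx => (hre z hz x hx).trans (Complex.re_le_norm _)
  have hslit : ∀ z ∈ ball ((a:ℂ)) ε, ∀ x ∈ Icc (0:ℝ) 1, (1 - z * (x:ℂ)) ∈ Complex.slitPlane :=
    fun z hz x hx => Complex.mem_slitPlane_iff.mpr (Or.inl (lt_of_lt_of_le hδ (hre z hz x hx)))
  -- cpow norm bound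
  have hcpow : ∀ (w : ℂ) (r : ℝ), r ≤ 0 → δ ≤ ‖w‖ → ‖w ^ ((r:ℝ):ℂ)‖ ≤ δ ^ r := by
    intro w r hr hw
    have h1 := Complex.norm_cpow_le w ((r:ℝ):ℂ)
    simp only [Complex.ofReal_re, Complex.ofReal_im, mul_zero, Real.exp_zero, div_one] at h1
    calc ‖w ^ ((r:ℝ):ℂ)‖ ≤ ‖w‖ ^ r := h1
      _ ≤ δ ^ r := Real.rpow_le_rpow_of_nonpos hδ hw hr
  -- measurability of F z and F' z
  have hmeas : ∀ z ∈ ball ((a:ℂ)) ε,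
      AEStronglyMeasurable (F z) (volume.restrict (Set.uIoc (0:ℝ) 1)) := by
    intro z hz
    rw [Set.uIoc_of_le zero_le_one, ← Measure.restrict_congr_set Ioo_ae_eq_Ioc]
    refine (ContinuousOn.mul ?_ (Complex.continuous_ofReal.comp_continuousOn hc_cont)).aestronglyMeasurable
      measurableSet_Ioo
    refine ContinuousOn.cpow_const
      ((continuous_const.sub (continuous_const.mul Complex.continuous_ofReal)).continuousOn)
      fun x hx => hslit z hz x (Ioo_subset_Icc_self hx)
  have hmeas' : ∀ z ∈ ball ((a:ℂ)) ε,
      AEStronglyMeasurable (F' z) (volume.restrict (Set.uIoc (0:ℝ) 1)) := by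
    intro z hz
    rw [Set.uIoc_of_le zero_le_one, ← Measure.restrict_congr_set Ioo_ae_eq_Ioc]
    refine (ContinuousOn.mul (ContinuousOn.mul (ContinuousOn.mul continuousOn_const ?_)
      (Complex.continuous_ofReal.neg.continuousOn))
      (Complex.continuous_ofReal.comp_continuousOn hc_cont)).aestronglyMeasurable
      measurableSet_Ioo
    refine ContinuousOn.cpow_const
      ((continuous_const.sub (continuous_const.mul Complex.continuous_ofReal)).continuousOn)
      fun x hx => hslit z hz x (Ioo_subset_Icc_self hx)
  -- integrability of F z for z in the ball
  have hFint : ∀ z ∈ ball ((a:ℂ)) ε, IntervalIntegrable (F z) volume 0 1 := by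
    intro z hz
    rw [intervalIntegrable_iff_integrableOn_Ioc_of_le zero_le_one]
    have hint : IntegrableOn (fun x => δ ^ (-α) * |c x|) (Ioc (0:ℝ) 1) volume := by
      have := hc_int.abs.const_mul (δ ^ (-α))
      rwa [intervalIntegrable_iff_integrableOn_Ioc_of_le zero_le_one] at this
    refine hint.mono' ?_ ?_
    · have := hmeas z hz; rwa [Set.uIoc_of_le zero_le_one] at this
    · rw [ae_restrict_iff' measurableSet_Ioc]
      refine ae_of_all _ fun x hx => ?_
      have hx' : x ∈ Icc (0:ℝ) 1 := Ioc_subset_Icc_self hx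
      have h1 : ‖F z x‖ = ‖(1 - z * (x:ℂ)) ^ ((-α : ℝ) : ℂ)‖ * |c x| := by
        simp only [hF, norm_mul, Complex.norm_real, Real.norm_eq_abs]
      rw [h1]
      exact mul_le_mul_of_nonneg_right (hcpow _ _ (by linarith) (habs z hz x hx')) (abs_nonneg _)
  -- differentiability of the parametric integral at each point of the ball
  set Φ : ℂ → ℂ := fun z => ∫ t in (0:ℝ)..1, F z t with hΦ
  have hdiffAt : ∀ z₀ ∈ ball ((a:ℂ)) ε, DifferentiableAt ℂ Φ z₀ := by
    intro z₀ hz₀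
    set ε' : ℝ := ε - dist z₀ ((a:ℂ)) with hε'def
    have hε'pos : 0 < ε' := sub_pos.2 (mem_ball.1 hz₀)
    have hball : ball z₀ ε' ⊆ ball ((a:ℂ)) ε := by
      refine ball_subset_ball' ?_
      simp only [hε'def]; linarith
    have key := intervalIntegral.hasDerivAt_integral_of_dominated_loc_of_deriv_le
      (F := F) (F' := F') (x₀ := z₀)
      (bound := fun t => α * δ ^ (-α - 1) * |c t|) (s := ball z₀ ε') (ball_mem_nhds z₀ hε'pos)
      (Filter.eventually_of_mem (isOpen_ball.mem_nhds hz₀) fun z hz => hmeas z hz)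
      (hFint z₀ hz₀) (hmeas' z₀ hz₀) ?_ ?_ ?_
    · exact key.2.differentiableAt
    · -- bound on F'
      refine ae_of_all _ fun t ht z hz => ?_
      rw [Set.uIoc_of_le zero_le_one] at ht
      have ht' : t ∈ Icc (0:ℝ) 1 := Ioc_subset_Icc_self ht
      have hz' : z ∈ ball ((a:ℂ)) ε := hball hz
      have h2 : ‖(1 - z * (t:ℂ)) ^ (((-α : ℝ) : ℂ) - 1)‖ ≤ δ ^ (-α - 1) := by
        have e1 : (((-α : ℝ) : ℂ) - 1) = (((-α - 1 : ℝ)) : ℂ) := by push_cast; ring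
        rw [e1]
        exact hcpow _ _ (by linarith) (habs z hz' t ht')
      have h3 : ‖F' z t‖ = α * ‖(1 - z * (t:ℂ)) ^ (((-α : ℝ) : ℂ) - 1)‖ * |t| * |c t| := by
        simp only [hF', norm_mul, norm_neg, Complex.norm_real, Real.norm_eq_abs, abs_neg]
        rw [abs_of_pos hα0]
      rw [h3]
      have ht1 : |t| ≤ 1 := abs_le.2 ⟨by linarith [ht'.1], ht'.2⟩
      calc α * ‖(1 - z * (t:ℂ)) ^ (((-α : ℝ) : ℂ) - 1)‖ * |t| * |c t|
          ≤ α * (δ ^ (-α - 1)) * 1 * |c t| := by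
            gcongr
        _ = α * δ ^ (-α - 1) * |c t| := by ring
    · -- integrability of the bound
      exact (hc_int.abs.const_mul _)
    · -- differentiability of F in z
      refine ae_of_all _ fun t ht z hz => ?_
      rw [Set.uIoc_of_le zero_le_one] at ht
      have ht' : t ∈ Icc (0:ℝ) 1 := Ioc_subset_Icc_self ht
      have hz' : z ∈ ball ((a:ℂ)) ε := hball hz
      have h1 : HasDerivAt (fun z : ℂ => 1 - z * (t:ℂ)) (-(t:ℂ)) z := by
        simpa using ((hasDerivAt_id z).mul_const ((t:ℂ))).const_sub 1
      exact (h1.cpow_const (hslit z hz' t ht')).mul_const _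
  -- Φ is analytic at a
  have hΦa : AnalyticAt ℂ Φ ((a:ℂ)) :=
    DifferentiableOn.analyticAt (fun z hz => (hdiffAt z hz).differentiableWithinAt)
      (isOpen_ball.mem_nhds (mem_ball_self hε))
  have hcomp : AnalyticAt ℝ (fun t : ℝ => Complex.reCLM (Φ (Complex.ofRealCLM t))) a :=
    (Complex.reCLM.analyticAt _).comp ((hΦa.restrictScalars).comp
      (Complex.ofRealCLM.analyticAt a))
  refine (hcomp.congr ?_).analyticWithinAt
  filter_upwards [Ioo_mem_nhds ha.1 ha.2] with t ht
  have h1 : Φ ((t:ℝ) : ℂ) = (((∫ x in (0:ℝ)..1, (1 - t * x) ^ (-α) * c x) : ℝ) : ℂ) := by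
    rw [← intervalIntegral.integral_ofReal]
    refine intervalIntegral.integral_congr fun x hx => ?_
    rw [Set.uIcc_of_le zero_le_one] at hx
    have h0 : (0:ℝ) ≤ 1 - t * x := by nlinarith [ht.1, ht.2, hx.1, hx.2]
    show (1 - (t:ℂ) * (x:ℂ)) ^ ((-α : ℝ) : ℂ) * ((c x : ℝ) : ℂ) = (((1 - t * x) ^ (-α) * c x : ℝ) : ℂ)
    conv_rhs => rw [Complex.ofReal_mul, Complex.ofReal_cpow h0]
    push_cast
    ring
  show Complex.reCLM (Φ ((t:ℝ) : ℂ)) = Idbl α t l₂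
  rw [h1, Idbl_eq]
  simp only [hc, hg, Complex.reCLM_apply, Complex.ofReal_re]
end

section
/- Let N and A be integers with N ≥ 2, N ≠ 2, 0 < A < N and gcd(N, A) = 1, and let ζ ∈ ℂ be a primitive N-th root of unity. Let c₁, c₂, c₃, c₄, c₅, c₆ ∈ ℂ. Suppose that for all integers i, j with 0 ≤ i ≤ N−1 and 0 ≤ j ≤ N−1: c₁ + c₂·ζ^{Aj} + c₃·ζ^{(N−2A)i + (2A−N)j} + c₄·ζ^{(N−A)i + (2A−N)j} + c₅·ζ^{(N−A)i} + c₆·ζ^{(N−2A)i + Aj} = 0. Then c₁ = c₂ = c₃ = c₄ = c₅ = c₆ = 0. -/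
open Finset

/-- Geometric sum of a non-trivial power of a primitive root vanishes. -/
lemma sum_zpow_eq_zero {N : ℕ} {ζ : ℂ} (hζ : IsPrimitiveRoot ζ N)
    {m : ℤ} (hm : ¬ ((N : ℤ) ∣ m)) :
    ∑ j ∈ Finset.range N, ζ ^ (m * j) = 0 := by
  have hx : ζ ^ m ≠ 1 := fun hx => hm ((hζ.zpow_eq_one_iff_dvd m).mp hx)
  have h1 : ∑ j ∈ Finset.range N, ζ ^ (m * j) = ∑ j ∈ Finset.range N, (ζ ^ m) ^ j := by
    refine Finset.sum_congr rfl fun j _ => ?_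
    rw [← zpow_natCast (ζ ^ m) j, ← zpow_mul]
  rw [h1, geom_sum_eq hx N]
  have hN1 : (ζ ^ m) ^ N = 1 := by
    rw [← zpow_natCast (ζ ^ m) N, ← zpow_mul, mul_comm, zpow_mul, zpow_natCast,
      hζ.pow_eq_one, one_zpow]
  rw [hN1, sub_self, zero_div]

lemma not_dvd_shift {N e : ℤ} (he : ¬ N ∣ e) (k : ℤ) :
    ∀ d : ℤ, d = e + k * N → ¬ N ∣ d := by
  rintro d rfl hd
  exact he (by have := dvd_sub hd (dvd_mul_left N k); simpa using this)

lemma vec6_four {α : Type*} (x0 x1 x2 x3 x4 x5 : α) :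
    (![x0, x1, x2, x3, x4, x5]) (4 : Fin 6) = x4 := rfl

lemma vec6_five {α : Type*} (x0 x1 x2 x3 x4 x5 : α) :
    (![x0, x1, x2, x3, x4, x5]) (5 : Fin 6) = x5 := rfl

/-- Orthogonality extraction lemma. -/
lemma key_lemma {N : ℕ} (hN : 0 < N) {ζ : ℂ} (hζ : IsPrimitiveRoot ζ N)
    (a b : Fin 6 → ℤ) (c : Fin 6 → ℂ)
    (hd : ∀ m k : Fin 6, m ≠ k → ¬ ((N : ℤ) ∣ (a m - a k)) ∨ ¬ ((N : ℤ) ∣ (b m - b k)))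
    (h : ∀ i j : ℕ, i < N → j < N →
      ∑ m, c m * ζ ^ (a m * i + b m * j) = 0) :
    ∀ k, c k = 0 := by
  have hζ0 : ζ ≠ 0 := hζ.ne_zero hN.ne'
  intro k
  have big : ∑ m, c m * ((∑ i ∈ Finset.range N, ζ ^ ((a m - a k) * i)) *
      (∑ j ∈ Finset.range N, ζ ^ ((b m - b k) * j))) = 0 := by
    have e1 : ∀ m : Fin 6, c m * ((∑ i ∈ Finset.range N, ζ ^ ((a m - a k) * i)) *
        (∑ j ∈ Finset.range N, ζ ^ ((b m - b k) * j)))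
        = ∑ i ∈ Finset.range N, ∑ j ∈ Finset.range N,
            c m * ζ ^ ((a m - a k) * i + (b m - b k) * j) := by
      intro m
      rw [Finset.sum_mul_sum, Finset.mul_sum]
      refine Finset.sum_congr rfl fun i _ => ?_
      rw [Finset.mul_sum]
      refine Finset.sum_congr rfl fun j _ => ?_
      rw [← zpow_add₀ hζ0]
    have e2 : ∀ i j : ℕ, (ζ ^ (-(a k * i + b k * j))) *
        ∑ m, c m * ζ ^ (a m * i + b m * j)
        = ∑ m, c m * ζ ^ ((a m - a k) * i + (b m - b k) * j) := by
      intro i j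
      rw [Finset.mul_sum]
      refine Finset.sum_congr rfl fun m _ => ?_
      have hexp : -(a k * (i : ℤ) + b k * j) + (a m * i + b m * j)
          = (a m - a k) * i + (b m - b k) * j := by ring
      rw [mul_left_comm, ← zpow_add₀ hζ0, hexp]
    calc ∑ m, c m * ((∑ i ∈ Finset.range N, ζ ^ ((a m - a k) * i)) *
            (∑ j ∈ Finset.range N, ζ ^ ((b m - b k) * j)))
        = ∑ m, ∑ i ∈ Finset.range N, ∑ j ∈ Finset.range N,
            c m * ζ ^ ((a m - a k) * i + (b m - b k) * j) :=
          Finset.sum_congr rfl fun m _ => e1 m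
      _ = ∑ i ∈ Finset.range N, ∑ m, ∑ j ∈ Finset.range N,
            c m * ζ ^ ((a m - a k) * i + (b m - b k) * j) := Finset.sum_comm
      _ = ∑ i ∈ Finset.range N, ∑ j ∈ Finset.range N, ∑ m : Fin 6,
            c m * ζ ^ ((a m - a k) * i + (b m - b k) * j) :=
          Finset.sum_congr rfl fun i _ => Finset.sum_comm
      _ = ∑ i ∈ Finset.range N, ∑ j ∈ Finset.range N,
            (ζ ^ (-(a k * i + b k * j))) * ∑ m, c m * ζ ^ (a m * i + b m * j) :=
          Finset.sum_congr rfl fun i _ => Finset.sum_congr rfl fun j _ => (e2 i j).symm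
      _ = 0 := by
          refine Finset.sum_eq_zero fun i hi => Finset.sum_eq_zero fun j hj => ?_
          rw [h i j (Finset.mem_range.mp hi) (Finset.mem_range.mp hj), mul_zero]
  rw [Finset.sum_eq_single k (fun m _ hmk => ?_) (fun hk => absurd (Finset.mem_univ k) hk)]
    at big
  · have hcount : (∑ i ∈ Finset.range N, ζ ^ ((a k - a k) * i)) = (N : ℂ) := by
      rw [sub_self]
      simp
    have hcountb : (∑ j ∈ Finset.range N, ζ ^ ((b k - b k) * j)) = (N : ℂ) := by
      rw [sub_self]
      simp
    rw [hcount, hcountb] at big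
    have hNne : (N : ℂ) ≠ 0 := Nat.cast_ne_zero.mpr hN.ne'
    rcases mul_eq_zero.mp big with hb0 | hb0
    · exact hb0
    · exact absurd hb0 (mul_ne_zero hNne hNne)
  · rcases hd m k hmk with hda | hdb
    · rw [sum_zpow_eq_zero hζ hda, zero_mul, mul_zero]
    · rw [sum_zpow_eq_zero hζ hdb, mul_zero, mul_zero]

/-- Let `N ≥ 2`, `N ≠ 2`, `0 < A < N`, `gcd(N, A) = 1` and let
`ζ ∈ ℂ` be a primitive `N`-th root of unity.  If the six coefficients
`c₁, …, c₆ ∈ ℂ` satisfy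
`c₁ + c₂ ζ^{Aj} + c₃ ζ^{(N−2A)i+(2A−N)j} + c₄ ζ^{(N−A)i+(2A−N)j}
  + c₅ ζ^{(N−A)i} + c₆ ζ^{(N−2A)i+Aj} = 0`
for all `0 ≤ i, j ≤ N−1`, then `c₁ = ⋯ = c₆ = 0`. -/
theorem stmt9 (N A : ℕ) (hN : 2 ≤ N) (hN2 : N ≠ 2) (hA0 : 0 < A) (hAN : A < N)
    (hgcd : Nat.gcd N A = 1) (ζ : ℂ) (hζ : IsPrimitiveRoot ζ N)
    (c₁ c₂ c₃ c₄ c₅ c₆ : ℂ)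
    (h : ∀ i j : ℤ, 0 ≤ i → i ≤ (N : ℤ) - 1 → 0 ≤ j → j ≤ (N : ℤ) - 1 →
      c₁ + c₂ * ζ ^ ((A : ℤ) * j)
        + c₃ * ζ ^ (((N : ℤ) - 2 * A) * i + (2 * (A : ℤ) - N) * j)
        + c₄ * ζ ^ (((N : ℤ) - A) * i + (2 * (A : ℤ) - N) * j)
        + c₅ * ζ ^ (((N : ℤ) - A) * i)
        + c₆ * ζ ^ (((N : ℤ) - 2 * A) * i + (A : ℤ) * j) = 0) :
    c₁ = 0 ∧ c₂ = 0 ∧ c₃ = 0 ∧ c₄ = 0 ∧ c₅ = 0 ∧ c₆ = 0 := by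
  have hN0 : 0 < N := by omega
  -- basic non-divisibility facts
  have hA' : ¬ ((N : ℤ) ∣ (A : ℤ)) := by
    intro hd
    have := Int.le_of_dvd (by exact_mod_cast hA0) hd
    omega
  have h2A' : ¬ ((N : ℤ) ∣ 2 * (A : ℤ)) := by
    intro hd
    have hd' : N ∣ 2 * A := by exact_mod_cast hd
    have : N ∣ 2 := (Nat.Coprime.dvd_of_dvd_mul_right (by exact hgcd) hd')
    have := Nat.le_of_dvd (by norm_num) this
    omega
  have hnA' : ¬ ((N : ℤ) ∣ -(A : ℤ)) := fun hd => hA' (dvd_neg.mp hd)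
  have hn2A' : ¬ ((N : ℤ) ∣ -(2 * (A : ℤ))) := fun hd => h2A' (dvd_neg.mp hd)
  set a : Fin 6 → ℤ := ![0, 0, (N : ℤ) - 2 * A, (N : ℤ) - A, (N : ℤ) - A, (N : ℤ) - 2 * A]
    with ha
  set b : Fin 6 → ℤ := ![0, (A : ℤ), 2 * (A : ℤ) - N, 2 * (A : ℤ) - N, 0, (A : ℤ)] with hb
  set c : Fin 6 → ℂ := ![c₁, c₂, c₃, c₄, c₅, c₆] with hc
  have hdist : ∀ m k : Fin 6, m ≠ k →
      ¬ ((N : ℤ) ∣ (a m - a k)) ∨ ¬ ((N : ℤ) ∣ (b m - b k)) := by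
    intro m k hmk
    fin_cases m <;> fin_cases k <;>
      simp only [ha, hb] <;> simp [vec6_four, vec6_five] <;>
      first
        | exact absurd rfl hmk
        | exact hA'
        | exact h2A'
        | exact hnA'
        | exact hn2A'
        | (apply not_dvd_shift hA' 0; ring1)
        | (apply not_dvd_shift hA' 1; ring1)
        | (apply not_dvd_shift hA' (-1); ring1)
        | (apply not_dvd_shift hnA' 0; ring1)
        | (apply not_dvd_shift hnA' 1; ring1)
        | (apply not_dvd_shift hnA' (-1); ring1)
        | (apply not_dvd_shift h2A' 0; ring1)
        | (apply not_dvd_shift h2A' 1; ring1)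
        | (apply not_dvd_shift h2A' (-1); ring1)
        | (apply not_dvd_shift hn2A' 0; ring1)
        | (apply not_dvd_shift hn2A' 1; ring1)
        | (apply not_dvd_shift hn2A' (-1); ring1)
        | (left; apply not_dvd_shift hA' 0; ring1)
        | (left; apply not_dvd_shift hA' 1; ring1)
        | (left; apply not_dvd_shift hA' (-1); ring1)
        | (left; apply not_dvd_shift hnA' 0; ring1)
        | (left; apply not_dvd_shift hnA' 1; ring1)
        | (left; apply not_dvd_shift hnA' (-1); ring1)
        | (left; apply not_dvd_shift h2A' 0; ring1)
        | (left; apply not_dvd_shift h2A' 1; ring1)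
        | (left; apply not_dvd_shift h2A' (-1); ring1)
        | (left; apply not_dvd_shift hn2A' 0; ring1)
        | (left; apply not_dvd_shift hn2A' 1; ring1)
        | (left; apply not_dvd_shift hn2A' (-1); ring1)
        | (right; apply not_dvd_shift hA' 0; ring1)
        | (right; apply not_dvd_shift hA' 1; ring1)
        | (right; apply not_dvd_shift hA' (-1); ring1)
        | (right; apply not_dvd_shift hnA' 0; ring1)
        | (right; apply not_dvd_shift hnA' 1; ring1)
        | (right; apply not_dvd_shift hnA' (-1); ring1)
        | (right; apply not_dvd_shift h2A' 0; ring1)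
        | (right; apply not_dvd_shift h2A' 1; ring1)
        | (right; apply not_dvd_shift h2A' (-1); ring1)
        | (right; apply not_dvd_shift hn2A' 0; ring1)
        | (right; apply not_dvd_shift hn2A' 1; ring1)
        | (right; apply not_dvd_shift hn2A' (-1); ring1)
  have hsum : ∀ i j : ℕ, i < N → j < N →
      ∑ m, c m * ζ ^ (a m * i + b m * j) = 0 := by
    intro i j hi hj
    have hij := h i j (by positivity) (by omega) (by positivity) (by omega)
    rw [Fin.sum_univ_six]
    simp only [ha, hb, hc]
    simp only [vec6_four, vec6_five]
    norm_num
    convert hij using 2 <;> push_cast <;> ring_nf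
  have hz := key_lemma hN0 hζ a b c hdist hsum
  refine ⟨?_, ?_, ?_, ?_, ?_, ?_⟩
  · simpa [hc] using hz 0
  · simpa [hc] using hz 1
  · simpa [hc] using hz 2
  · simpa [hc] using hz 3
  · simpa [hc] using hz 4
  · simpa [hc] using hz 5
end

section
/- Let N and A be integers with 0 < A < N and 2A ≠ N. Define on the open square D = (0,1) × (0,1) the six functions (all powers being real powers with the indicated rational exponents): h₁(λ₁,λ₂) = 1; h₂(λ₁,λ₂) = (1−λ₁)^{−A/N}(1−λ₂)^{A/N}; h₃(λ₁,λ₂) = λ₁^{(2A−N)/N}(1−λ₁)^{(N−2A)/N}·λ₂^{(N−2A)/N}(1−λ₂)^{(2A−N)/N}; h₄(λ₁,λ₂) = λ₁^{(A−N)/N}(1−λ₁)^{(N−2A)/N}·λ₂^{(N−A)/N}(1−λ₂)^{(2A−N)/N}; h₅(λ₁,λ₂) = λ₁^{(A−N)/N}·λ₂^{(N−A)/N}; h₆(λ₁,λ₂) = λ₁^{(2A−N)/N}(1−λ₁)^{−A/N}·λ₂^{(N−2A)/N}(1−λ₂)^{A/N}. If c₁, …, c₆ ∈ ℂ satisfy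 c₁h₁(λ₁,λ₂) + c₂h₂(λ₁,λ₂) + c₃h₃(λ₁,λ₂) + c₄h₄(λ₁,λ₂) + c₅h₅(λ₁,λ₂) + c₆h₆(λ₁,λ₂) = 0 for all (λ₁,λ₂) ∈ D, then c₁ = ⋯ = c₆ = 0. -/
open Real Filter Set

private lemma half_rpow_ne {p q : ℝ} (hpq : p ≠ q) : ((1:ℝ)/2) ^ p ≠ ((1:ℝ)/2) ^ q := by
  rcases hpq.lt_or_gt with h | h
  · exact (Real.rpow_lt_rpow_of_exponent_gt (x := (1:ℝ)/2) (by norm_num) (by norm_num) h).ne'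
  · exact (Real.rpow_lt_rpow_of_exponent_gt (x := (1:ℝ)/2) (by norm_num) (by norm_num) h).ne

private lemma two_pow (p q : ℝ) (hpq : p ≠ q) (c d : ℂ)
    (h : ∀ x ∈ Set.Ioo (0:ℝ) 1, c * ((x ^ p : ℝ) : ℂ) + d * ((x ^ q : ℝ) : ℂ) = 0) :
    c = 0 ∧ d = 0 := by
  have h1 := h (1/2) (by constructor <;> norm_num)
  have h2 := h (1/4) (by constructor <;> norm_num)
  have e4 : ∀ r : ℝ, ((1:ℝ)/4) ^ r = ((1:ℝ)/2) ^ r * ((1:ℝ)/2) ^ r := by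
    intro r
    rw [← Real.mul_rpow (by norm_num) (by norm_num)]; norm_num
  rw [e4 p, e4 q] at h2
  have huv : ((1:ℝ)/2) ^ p ≠ ((1:ℝ)/2) ^ q := half_rpow_ne hpq
  have hu0 : (0:ℝ) < ((1:ℝ)/2) ^ p := Real.rpow_pos_of_pos (by norm_num) p
  have hv0 : (0:ℝ) < ((1:ℝ)/2) ^ q := Real.rpow_pos_of_pos (by norm_num) q
  have key : d * ((((1:ℝ)/2) ^ q : ℝ) : ℂ)
      * (((((1:ℝ)/2) ^ p : ℝ) : ℂ) - ((((1:ℝ)/2) ^ q : ℝ) : ℂ)) = 0 := by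
    push_cast at h1 h2 ⊢
    linear_combination ((((1:ℝ)/2) ^ p : ℝ) : ℂ) * h1 - h2
  have hd : d = 0 := by
    rcases mul_eq_zero.mp key with h' | h'
    · rcases mul_eq_zero.mp h' with h'' | h''
      · exact h''
      · exact absurd (Complex.ofReal_eq_zero.mp h'') hv0.ne'
    · exact absurd (sub_eq_zero.mp h') (by exact_mod_cast huv)
  refine ⟨?_, hd⟩
  rw [hd, zero_mul, add_zero] at h1
  rcases mul_eq_zero.mp h1 with h' | h'
  · exact h'
  · exact absurd (Complex.ofReal_eq_zero.mp h') hu0.ne'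

private lemma tendT (p q : ℝ) (hp : 0 ≤ p) (d K : ℂ) :
    Tendsto (fun x : ℝ => d * ((x ^ p * (1 - x) ^ q : ℝ) : ℂ) * K)
      (nhdsWithin 0 (Set.Ioi 0)) (nhds (d * (((0:ℝ) ^ p : ℝ) : ℂ) * K)) := by
  have hA : Tendsto (fun x : ℝ => x ^ p) (nhdsWithin 0 (Set.Ioi 0)) (nhds ((0:ℝ) ^ p)) :=
    ((Real.continuousAt_rpow_const 0 p (Or.inr hp)).tendsto).mono_left nhdsWithin_le_nhds
  have hB : Tendsto (fun x : ℝ => (1 - x) ^ q) (nhdsWithin 0 (Set.Ioi 0)) (nhds 1) := by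
    have h1 : ContinuousAt (fun x : ℝ => 1 - x) 0 := continuousAt_const.sub continuousAt_id
    have h2 : ContinuousAt (fun y : ℝ => y ^ q) ((fun x : ℝ => 1 - x) 0) := by
      apply Real.continuousAt_rpow_const
      left; norm_num
    have := (h2.comp h1).tendsto.mono_left (nhdsWithin_le_nhds (s := Set.Ioi (0:ℝ)))
    simpa [Function.comp_def] using this
  have hAB := hA.mul hB
  rw [mul_one] at hAB
  have h1 : Tendsto (fun x : ℝ => ((x ^ p * (1 - x) ^ q : ℝ) : ℂ))
      (nhdsWithin 0 (Set.Ioi 0)) (nhds (((0:ℝ) ^ p : ℝ) : ℂ)) :=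
    (Complex.continuous_ofReal.tendsto _).comp hAB
  exact (h1.const_mul d).mul_const K

private lemma gen6 (p₁ q₁ p₂ q₂ p₃ q₃ p₄ q₄ p₅ q₅ p₆ q₆ : ℝ)
    (hp₁ : 0 ≤ p₁) (hp₂ : 0 ≤ p₂) (hp₃ : 0 ≤ p₃) (hp₄ : 0 ≤ p₄) (hp₅ : 0 ≤ p₅) (hp₆ : 0 ≤ p₆)
    (d₁ d₂ d₃ d₄ d₅ d₆ K₁ K₂ K₃ K₄ K₅ K₆ : ℂ)
    (h : ∀ x ∈ Set.Ioo (0:ℝ) 1,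
      d₁ * ((x ^ p₁ * (1 - x) ^ q₁ : ℝ) : ℂ) * K₁
      + d₂ * ((x ^ p₂ * (1 - x) ^ q₂ : ℝ) : ℂ) * K₂
      + d₃ * ((x ^ p₃ * (1 - x) ^ q₃ : ℝ) : ℂ) * K₃
      + d₄ * ((x ^ p₄ * (1 - x) ^ q₄ : ℝ) : ℂ) * K₄
      + d₅ * ((x ^ p₅ * (1 - x) ^ q₅ : ℝ) : ℂ) * K₅
      + d₆ * ((x ^ p₆ * (1 - x) ^ q₆ : ℝ) : ℂ) * K₆ = 0) :
    d₁ * (((0:ℝ) ^ p₁ : ℝ) : ℂ) * K₁ + d₂ * (((0:ℝ) ^ p₂ : ℝ) : ℂ) * K₂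
      + d₃ * (((0:ℝ) ^ p₃ : ℝ) : ℂ) * K₃ + d₄ * (((0:ℝ) ^ p₄ : ℝ) : ℂ) * K₄
      + d₅ * (((0:ℝ) ^ p₅ : ℝ) : ℂ) * K₅ + d₆ * (((0:ℝ) ^ p₆ : ℝ) : ℂ) * K₆ = 0 := by
  have T := ((((((tendT p₁ q₁ hp₁ d₁ K₁).add (tendT p₂ q₂ hp₂ d₂ K₂)).add
    (tendT p₃ q₃ hp₃ d₃ K₃)).add (tendT p₄ q₄ hp₄ d₄ K₄)).add
    (tendT p₅ q₅ hp₅ d₅ K₅)).add (tendT p₆ q₆ hp₆ d₆ K₆))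
  have T0 : Tendsto (fun x : ℝ =>
      d₁ * ((x ^ p₁ * (1 - x) ^ q₁ : ℝ) : ℂ) * K₁
      + d₂ * ((x ^ p₂ * (1 - x) ^ q₂ : ℝ) : ℂ) * K₂
      + d₃ * ((x ^ p₃ * (1 - x) ^ q₃ : ℝ) : ℂ) * K₃
      + d₄ * ((x ^ p₄ * (1 - x) ^ q₄ : ℝ) : ℂ) * K₄
      + d₅ * ((x ^ p₅ * (1 - x) ^ q₅ : ℝ) : ℂ) * K₅
      + d₆ * ((x ^ p₆ * (1 - x) ^ q₆ : ℝ) : ℂ) * K₆)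
      (nhdsWithin 0 (Set.Ioi 0)) (nhds 0) := by
    have ev : (fun _ : ℝ => (0:ℂ)) =ᶠ[nhdsWithin 0 (Set.Ioi 0)] (fun x : ℝ =>
      d₁ * ((x ^ p₁ * (1 - x) ^ q₁ : ℝ) : ℂ) * K₁
      + d₂ * ((x ^ p₂ * (1 - x) ^ q₂ : ℝ) : ℂ) * K₂
      + d₃ * ((x ^ p₃ * (1 - x) ^ q₃ : ℝ) : ℂ) * K₃
      + d₄ * ((x ^ p₄ * (1 - x) ^ q₄ : ℝ) : ℂ) * K₄
      + d₅ * ((x ^ p₅ * (1 - x) ^ q₅ : ℝ) : ℂ) * K₅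
      + d₆ * ((x ^ p₆ * (1 - x) ^ q₆ : ℝ) : ℂ) * K₆) := by
      filter_upwards [Ioo_mem_nhdsGT_of_mem
        (by constructor <;> norm_num : (0:ℝ) ∈ Set.Ico (0:ℝ) 1)] with x hx
      exact (h x hx).symm
    exact Filter.Tendsto.congr' ev tendsto_const_nhds
  exact tendsto_nhds_unique T T0

/-- Let `N, A ∈ ℤ` with `0 < A < N` and `2A ≠ N`.  The six
functions on the open square `(0,1)²` (real powers with the indicated rational
exponents)
`h₁ = 1`,
`h₂ = (1−λ₁)^{−A/N}(1−λ₂)^{A/N}`,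
`h₃ = λ₁^{(2A−N)/N}(1−λ₁)^{(N−2A)/N} λ₂^{(N−2A)/N}(1−λ₂)^{(2A−N)/N}`,
`h₄ = λ₁^{(A−N)/N}(1−λ₁)^{(N−2A)/N} λ₂^{(N−A)/N}(1−λ₂)^{(2A−N)/N}`,
`h₅ = λ₁^{(A−N)/N} λ₂^{(N−A)/N}`,
`h₆ = λ₁^{(2A−N)/N}(1−λ₁)^{−A/N} λ₂^{(N−2A)/N}(1−λ₂)^{A/N}`
are linearly independent over `ℂ`. -/
theorem stmt11 (N A : ℤ) (hA0 : 0 < A) (hAN : A < N) (h2A : 2 * A ≠ N)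
    (c₁ c₂ c₃ c₄ c₅ c₆ : ℂ)
    (h : ∀ l₁ l₂ : ℝ, l₁ ∈ Set.Ioo (0 : ℝ) 1 → l₂ ∈ Set.Ioo (0 : ℝ) 1 →
      c₁ * (1 : ℂ)
        + c₂ * (((1 - l₁) ^ (-(A : ℝ) / N) * (1 - l₂) ^ ((A : ℝ) / N) : ℝ) : ℂ)
        + c₃ * ((l₁ ^ ((2 * (A : ℝ) - N) / N) * (1 - l₁) ^ (((N : ℝ) - 2 * A) / N) *
            (l₂ ^ (((N : ℝ) - 2 * A) / N) * (1 - l₂) ^ ((2 * (A : ℝ) - N) / N)) : ℝ) : ℂ)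
        + c₄ * (((l₁ ^ (((A : ℝ) - N) / N) * (1 - l₁) ^ (((N : ℝ) - 2 * A) / N) *
            (l₂ ^ (((N : ℝ) - A) / N) * (1 - l₂) ^ ((2 * (A : ℝ) - N) / N)) : ℝ)) : ℂ)
        + c₅ * ((l₁ ^ (((A : ℝ) - N) / N) * l₂ ^ (((N : ℝ) - A) / N) : ℝ) : ℂ)
        + c₆ * (((l₁ ^ ((2 * (A : ℝ) - N) / N) * (1 - l₁) ^ (-(A : ℝ) / N) *
            (l₂ ^ (((N : ℝ) - 2 * A) / N) * (1 - l₂) ^ ((A : ℝ) / N)) : ℝ)) : ℂ) = 0) :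
    c₁ = 0 ∧ c₂ = 0 ∧ c₃ = 0 ∧ c₄ = 0 ∧ c₅ = 0 ∧ c₆ = 0 := by
  have hN0 : (0:ℝ) < (N:ℝ) := by exact_mod_cast hA0.trans hAN
  have hn : (N:ℝ) ≠ 0 := hN0.ne'
  have hA0' : (0:ℝ) < (A:ℝ) := by exact_mod_cast hA0
  have hAN' : (A:ℝ) < (N:ℝ) := by exact_mod_cast hAN
  have h2A' : 2 * (A:ℝ) ≠ (N:ℝ) := by exact_mod_cast h2A
  set e₁ := -(A : ℝ) / N with he₁
  set e₂ := (A : ℝ) / N with he₂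
  set e₃ := (2 * (A : ℝ) - N) / N with he₃
  set e₄ := ((N : ℝ) - 2 * A) / N with he₄
  set e₅ := ((A : ℝ) - N) / N with he₅
  set e₆ := ((N : ℝ) - A) / N with he₆
  have he₂p : 0 < e₂ := by rw [he₂]; exact div_pos hA0' hN0
  have he₆p : 0 < e₆ := by rw [he₆]; exact div_pos (by linarith) hN0
  have he₃n : e₃ ≠ 0 := by rw [he₃]; exact div_ne_zero (sub_ne_zero.mpr h2A') hn
  have he₄n : e₄ ≠ 0 := by rw [he₄]; exact div_ne_zero (sub_ne_zero.mpr (Ne.symm h2A')) hn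
  have f1 : e₆ + e₃ = e₂ := by rw [he₂, he₃, he₆]; ring
  have f2 : e₆ + e₅ = 0 := by rw [he₅, he₆]; ring
  have f3 : e₂ + e₁ = 0 := by rw [he₁, he₂]; ring
  have f4 : e₂ + e₄ = e₆ := by rw [he₂, he₄, he₆]; ring
  -- Step 1 : limit λ₁ → 0⁺ after multiplying by λ₁ ^ e₆ : isolates c₄, c₅
  have key1 : ∀ m ∈ Set.Ioo (0:ℝ) 1,
      c₄ * ((m ^ e₆ * (1 - m) ^ e₃ : ℝ) : ℂ) + c₅ * ((m ^ e₆ : ℝ) : ℂ) = 0 := by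
    intro m hm
    have hyp : ∀ x ∈ Set.Ioo (0:ℝ) 1,
        c₁ * ((x ^ e₆ * (1 - x) ^ (0:ℝ) : ℝ) : ℂ) * 1
        + c₂ * ((x ^ e₆ * (1 - x) ^ e₁ : ℝ) : ℂ) * (((1 - m) ^ e₂ : ℝ) : ℂ)
        + c₃ * ((x ^ e₂ * (1 - x) ^ e₄ : ℝ) : ℂ) * ((m ^ e₄ * (1 - m) ^ e₃ : ℝ) : ℂ)
        + c₄ * ((x ^ (0:ℝ) * (1 - x) ^ e₄ : ℝ) : ℂ) * ((m ^ e₆ * (1 - m) ^ e₃ : ℝ) : ℂ)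
        + c₅ * ((x ^ (0:ℝ) * (1 - x) ^ (0:ℝ) : ℝ) : ℂ) * ((m ^ e₆ : ℝ) : ℂ)
        + c₆ * ((x ^ e₂ * (1 - x) ^ e₁ : ℝ) : ℂ) * ((m ^ e₄ * (1 - m) ^ e₂ : ℝ) : ℂ) = 0 := by
      intro x hx
      have hx0 : (0:ℝ) < x := hx.1
      have H := h x m hx hm
      have E1 : x ^ e₂ = x ^ e₆ * x ^ e₃ := by rw [← Real.rpow_add hx0, f1]
      have E2 : x ^ (0:ℝ) = x ^ e₆ * x ^ e₅ := by rw [← Real.rpow_add hx0, f2]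
      rw [E1, E2]
      simp only [Real.rpow_zero]
      push_cast at H ⊢
      linear_combination ((x ^ e₆ : ℝ) : ℂ) * H
    have G := gen6 e₆ (0:ℝ) e₆ e₁ e₂ e₄ (0:ℝ) e₄ (0:ℝ) (0:ℝ) e₂ e₁
      he₆p.le he₆p.le he₂p.le le_rfl le_rfl he₂p.le
      c₁ c₂ c₃ c₄ c₅ c₆ 1 (((1 - m) ^ e₂ : ℝ) : ℂ) ((m ^ e₄ * (1 - m) ^ e₃ : ℝ) : ℂ)
      ((m ^ e₆ * (1 - m) ^ e₃ : ℝ) : ℂ) ((m ^ e₆ : ℝ) : ℂ)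
      ((m ^ e₄ * (1 - m) ^ e₂ : ℝ) : ℂ) hyp
    simpa [Real.zero_rpow he₆p.ne', Real.zero_rpow he₂p.ne', Real.rpow_zero] using G
  obtain ⟨hc₄, hc₅⟩ : c₄ = 0 ∧ c₅ = 0 := by
    apply two_pow e₃ 0 he₃n c₄ c₅
    intro y hy
    have hy1 : (1:ℝ) - y ∈ Set.Ioo (0:ℝ) 1 := ⟨by linarith [hy.2], by linarith [hy.1]⟩
    have K := key1 (1 - y) hy1
    rw [sub_sub_cancel] at K
    have hne : ((1 - y) ^ e₆ : ℝ) ≠ 0 := (Real.rpow_pos_of_pos (by linarith [hy.2]) e₆).ne'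
    have factored : (c₄ * ((y ^ e₃ : ℝ) : ℂ) + c₅ * ((y ^ (0:ℝ) : ℝ) : ℂ))
        * (((1 - y) ^ e₆ : ℝ) : ℂ) = 0 := by
      rw [Real.rpow_zero]
      push_cast at K ⊢
      linear_combination K
    exact (mul_eq_zero.mp factored).resolve_right (by exact_mod_cast hne)
  -- Step 2 : limit λ₁ → 1⁻ (substitute l₁ = 1 - x) : isolates c₂, c₆
  have key2 : ∀ m ∈ Set.Ioo (0:ℝ) 1,
      c₂ * (((1 - m) ^ e₂ : ℝ) : ℂ) + c₆ * ((m ^ e₄ * (1 - m) ^ e₂ : ℝ) : ℂ) = 0 := by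
    intro m hm
    have hyp : ∀ x ∈ Set.Ioo (0:ℝ) 1,
        c₁ * ((x ^ e₂ * (1 - x) ^ (0:ℝ) : ℝ) : ℂ) * 1
        + c₂ * ((x ^ (0:ℝ) * (1 - x) ^ (0:ℝ) : ℝ) : ℂ) * (((1 - m) ^ e₂ : ℝ) : ℂ)
        + c₃ * ((x ^ e₆ * (1 - x) ^ e₃ : ℝ) : ℂ) * ((m ^ e₄ * (1 - m) ^ e₃ : ℝ) : ℂ)
        + c₄ * ((x ^ e₆ * (1 - x) ^ e₅ : ℝ) : ℂ) * ((m ^ e₆ * (1 - m) ^ e₃ : ℝ) : ℂ)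
        + c₅ * ((x ^ e₂ * (1 - x) ^ e₅ : ℝ) : ℂ) * ((m ^ e₆ : ℝ) : ℂ)
        + c₆ * ((x ^ (0:ℝ) * (1 - x) ^ e₃ : ℝ) : ℂ) * ((m ^ e₄ * (1 - m) ^ e₂ : ℝ) : ℂ) = 0 := by
      intro x hx
      have hx0 : (0:ℝ) < x := hx.1
      have hx1 : (1:ℝ) - x ∈ Set.Ioo (0:ℝ) 1 := ⟨by linarith [hx.2], by linarith [hx.1]⟩
      have H := h (1 - x) m hx1 hm
      rw [sub_sub_cancel] at H
      have E3 : x ^ (0:ℝ) = x ^ e₂ * x ^ e₁ := by rw [← Real.rpow_add hx0, f3]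
      have E4 : x ^ e₆ = x ^ e₂ * x ^ e₄ := by rw [← Real.rpow_add hx0, f4]
      rw [E3, E4]
      simp only [Real.rpow_zero]
      push_cast at H ⊢
      linear_combination ((x ^ e₂ : ℝ) : ℂ) * H
    have G := gen6 e₂ (0:ℝ) (0:ℝ) (0:ℝ) e₆ e₃ e₆ e₅ e₂ e₅ (0:ℝ) e₃
      he₂p.le le_rfl he₆p.le he₆p.le he₂p.le le_rfl
      c₁ c₂ c₃ c₄ c₅ c₆ 1 (((1 - m) ^ e₂ : ℝ) : ℂ) ((m ^ e₄ * (1 - m) ^ e₃ : ℝ) : ℂ)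
      ((m ^ e₆ * (1 - m) ^ e₃ : ℝ) : ℂ) ((m ^ e₆ : ℝ) : ℂ)
      ((m ^ e₄ * (1 - m) ^ e₂ : ℝ) : ℂ) hyp
    simpa [Real.zero_rpow he₆p.ne', Real.zero_rpow he₂p.ne', Real.rpow_zero] using G
  obtain ⟨hc₂, hc₆⟩ : c₂ = 0 ∧ c₆ = 0 := by
    apply two_pow (0:ℝ) e₄ (Ne.symm he₄n) c₂ c₆
    intro y hy
    have K := key2 y hy
    have hne : ((1 - y) ^ e₂ : ℝ) ≠ 0 := (Real.rpow_pos_of_pos (by linarith [hy.2]) e₂).ne'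
    have factored : (c₂ * ((y ^ (0:ℝ) : ℝ) : ℂ) + c₆ * ((y ^ e₄ : ℝ) : ℂ))
        * (((1 - y) ^ e₂ : ℝ) : ℂ) = 0 := by
      rw [Real.rpow_zero]
      push_cast at K ⊢
      linear_combination K
    exact (mul_eq_zero.mp factored).resolve_right (by exact_mod_cast hne)
  -- Step 3 : point evaluations for c₁, c₃
  have mem2 : (1/2 : ℝ) ∈ Set.Ioo (0:ℝ) 1 := by constructor <;> norm_num
  have mem3 : (1/3 : ℝ) ∈ Set.Ioo (0:ℝ) 1 := by constructor <;> norm_num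
  have mem23 : (2/3 : ℝ) ∈ Set.Ioo (0:ℝ) 1 := by constructor <;> norm_num
  have H1 := h (1/2) (1/2) mem2 mem2
  have H2 := h (1/3) (2/3) mem3 mem23
  rw [hc₂, hc₄, hc₅, hc₆] at H1 H2
  simp only [zero_mul, add_zero, zero_add, mul_one] at H1 H2
  rw [show (1 - 1/2 : ℝ) = 1/2 from by norm_num] at H1
  have V1 : ((1/2:ℝ)) ^ e₃ * (1/2) ^ e₄ * ((1/2) ^ e₄ * (1/2) ^ e₃) = 1 := by
    rw [← Real.rpow_add (by norm_num : (0:ℝ) < 1/2), ← Real.rpow_add (by norm_num : (0:ℝ) < 1/2),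
      ← Real.rpow_add (by norm_num : (0:ℝ) < 1/2)]
    rw [show e₃ + e₄ + (e₄ + e₃) = 0 from by rw [he₃, he₄]; ring, Real.rpow_zero]
  rw [V1] at H1
  norm_num at H1
  rw [show (1 - 1/3 : ℝ) = 2/3 from by norm_num,
    show (1 - 2/3 : ℝ) = 1/3 from by norm_num] at H2
  have hb : ((2/3:ℝ)) ^ e₃ ≠ 0 := (Real.rpow_pos_of_pos (by norm_num) _).ne'
  have base : ((1/3:ℝ)) ^ e₃ * (2/3) ^ e₄ = (1/2) ^ e₃ := by
    have he : e₄ = -e₃ := by rw [he₃, he₄]; ring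
    rw [he, Real.rpow_neg (by norm_num : (0:ℝ) ≤ 2/3),
      show (1/3:ℝ) = (1/2) * (2/3) from by norm_num,
      Real.mul_rpow (by norm_num) (by norm_num), mul_assoc, mul_inv_cancel₀ hb, mul_one]
  have V2 : ((1/3:ℝ)) ^ e₃ * (2/3) ^ e₄ * ((2/3) ^ e₄ * (1/3) ^ e₃)
      = (1/2:ℝ) ^ (e₃ + e₃) := by
    calc ((1/3:ℝ)) ^ e₃ * (2/3) ^ e₄ * ((2/3) ^ e₄ * (1/3) ^ e₃)
        = (((1/3:ℝ)) ^ e₃ * (2/3) ^ e₄) * (((1/3:ℝ)) ^ e₃ * (2/3) ^ e₄) := by ring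
      _ = (1/2:ℝ) ^ e₃ * (1/2) ^ e₃ := by rw [base]
      _ = (1/2:ℝ) ^ (e₃ + e₃) := (Real.rpow_add (by norm_num) _ _).symm
  rw [V2] at H2
  have hw : ((1/2:ℝ)) ^ (e₃ + e₃) ≠ 1 := by
    have := half_rpow_ne (p := e₃ + e₃) (q := 0)
      (by intro hh; exact he₃n (by linarith))
    simpa [Real.rpow_zero] using this
  have hc₃ : c₃ = 0 := by
    have hkey : c₃ * ((((1/2:ℝ)) ^ (e₃ + e₃) : ℝ) : ℂ) - c₃ = 0 := by
      linear_combination H2 - H1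
    have hkey' : c₃ * (((((1/2:ℝ)) ^ (e₃ + e₃) : ℝ) : ℂ) - 1) = 0 := by
      linear_combination hkey
    rcases mul_eq_zero.mp hkey' with h' | h'
    · exact h'
    · have : ((1/2:ℝ)) ^ (e₃ + e₃) = 1 := by exact_mod_cast sub_eq_zero.mp h'
      exact absurd this hw
  have hc₁ : c₁ = 0 := by linear_combination H1 - hc₃
  exact ⟨hc₁, hc₂, hc₃, hc₄, hc₅, hc₆⟩
end
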